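/- arXiv:1307.2163 — 4 statements merged into one kernel-verified Lean document; each statement's English description precedes it below -/
import Mathlib

section
/- There are no geodesic rays in DL_2(q) with exactly two turns: any infinite ray from the origin that bottoms out first in one tree T_i at depth k > 0 and then in the other tree T_{1-i} after l > 0 further steps, thereafter descending forever in T_i, fails to be a geodesic. Specifically, the vertex γ(k+2l) on such a ray can be reached from the origin by a path of length strictly less than k+2l. -/
/-- A vertex of the (q+1)-regular tree with a distinguished end, in the
horocyclic model: a height `k ∈ ℤ` together with a finitely supported
labelling of the levels strictly below `k`. -/
structure TreeVert (q : ℕ) where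
  height : ℤ
  labels : ℤ → ℕ
  labels_lt : ∀ n, labels n = 0 ∨ labels n < q
  supp_below : ∀ n, height ≤ n → labels n = 0
  fin_supp : (Function.support labels).Finite

namespace DL

variable {q d : ℕ}

/-- `v` is a child of `u` (one step further from the distinguished end). -/
abbrev treeAdjUp (u v : TreeVert q) : Prop :=
  v.height = u.height + 1 ∧ ∀ n, n ≠ u.height → v.labels n = u.labels n

/-- The (q+1)-regular tree. -/
def TreeGraph (q : ℕ) : SimpleGraph (TreeVert q) where
  Adj u v := treeAdjUp u v ∨ treeAdjUp v u
  symm := ⟨fun u v h => Or.symm h⟩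
  loopless := by
    constructor
    intro u h
    rcases h with ⟨h1, _⟩ | ⟨h1, _⟩ <;> omega

/-- The base vertex of the tree. -/
def treeOrigin (q : ℕ) : TreeVert q :=
  ⟨0, fun _ => 0, fun _ => Or.inl rfl, fun _ _ => rfl, by simp⟩

/-- Vertices of the Diestel–Leader graph `DL_d(q)`:
`d`-tuples of tree vertices whose heights sum to zero. -/
def DLVert (d q : ℕ) : Type :=
  {x : Fin d → TreeVert q // (∑ i, (x i).height) = 0}

/-- The Diestel–Leader graph `DL_d(q)`: an edge ascends in one tree and
descends in another, all other coordinates being fixed. -/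
def DLGraph (d q : ℕ) : SimpleGraph (DLVert d q) where
  Adj v w := ∃ i j : Fin d, i ≠ j ∧ treeAdjUp (v.1 i) (w.1 i) ∧ treeAdjUp (w.1 j) (v.1 j) ∧
      ∀ k : Fin d, k ≠ i → k ≠ j → v.1 k = w.1 k
  symm := by
    constructor
    rintro v w ⟨i, j, hij, h1, h2, h3⟩
    exact ⟨j, i, hij.symm, h2, h1, fun k hk1 hk2 => (h3 k hk2 hk1).symm⟩
  loopless := by
    constructor
    rintro v ⟨i, j, hij, ⟨h1, _⟩, _⟩
    omega

/-- The base point of `DL_d(q)`. -/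
def origin (d q : ℕ) : DLVert d q :=
  ⟨fun _ => treeOrigin q, by simp [treeOrigin]⟩

/-- A geodesic ray in `DL_d(q)` : an isometric embedding of `ℕ`. -/
def IsGeodesicRay (γ : ℕ → DLVert d q) : Prop :=
  ∀ m n : ℕ, m ≤ n → (DLGraph d q).dist (γ m) (γ n) = n - m

/-- Two rays are asymptotic when they stay at uniformly bounded distance. -/
def Asymptotic (γ γ' : ℕ → DLVert d q) : Prop :=
  ∃ C : ℕ, ∀ n : ℕ, (DLGraph d q).dist (γ n) (γ' n) ≤ C

instance : TopologicalSpace (DLVert d q) := ⊥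

/-- Geodesic rays emanating from the origin, with the topology of uniform
convergence on compact sets (= pointwise convergence, the vertex set being
discrete). -/
def RaySpace (d q : ℕ) : Type :=
  {γ : ℕ → DLVert d q // IsGeodesicRay γ ∧ γ 0 = origin d q}

instance : TopologicalSpace (RaySpace d q) := by
  unfold RaySpace; infer_instance

lemma reachable_origin (γ : RaySpace d q) (n : ℕ) :
    (DLGraph d q).Reachable (origin d q) (γ.1 n) := by
  cases n with
  | zero => rw [γ.2.2]
  | succ n =>
    have h := γ.2.1 0 (n + 1) (Nat.zero_le _)
    have hne : (DLGraph d q).dist (γ.1 0) (γ.1 (n + 1)) ≠ 0 := by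
      rw [h]; omega
    have := SimpleGraph.Reachable.of_dist_ne_zero hne
    rwa [γ.2.2] at this

/-- Asymptoticity as an equivalence relation on geodesic rays from the origin. -/
def asympSetoid (d q : ℕ) : Setoid (RaySpace d q) where
  r γ γ' := Asymptotic γ.1 γ'.1
  iseqv := by
    constructor
    · intro γ
      exact ⟨0, fun n => by simp [SimpleGraph.dist_self]⟩
    · rintro γ γ' ⟨C, hC⟩
      exact ⟨C, fun n => by rw [SimpleGraph.dist_comm]; exact hC n⟩
    · rintro a b c ⟨C1, h1⟩ ⟨C2, h2⟩
      refine ⟨C1 + C2, fun n => ?_⟩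
      have hab : (DLGraph d q).Reachable (a.1 n) (b.1 n) :=
        (reachable_origin a n).symm.trans (reachable_origin b n)
      have hbc : (DLGraph d q).Reachable (b.1 n) (c.1 n) :=
        (reachable_origin b n).symm.trans (reachable_origin c n)
      obtain ⟨p, hp⟩ := hab.exists_walk_length_eq_dist
      obtain ⟨p', hp'⟩ := hbc.exists_walk_length_eq_dist
      calc (DLGraph d q).dist (a.1 n) (c.1 n) ≤ (p.append p').length :=
            SimpleGraph.dist_le _
        _ = (DLGraph d q).dist (a.1 n) (b.1 n) + (DLGraph d q).dist (b.1 n) (c.1 n) := by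
            rw [SimpleGraph.Walk.length_append, hp, hp']
        _ ≤ C1 + C2 := Nat.add_le_add (h1 n) (h2 n)

/-- The visual boundary of `DL_d(q)`: asymptotic classes of geodesic rays
from the origin, with the quotient topology. -/
def Boundary (d q : ℕ) : Type := Quotient (asympSetoid d q)

instance : TopologicalSpace (Boundary d q) := by
  unfold Boundary; infer_instance

/-- A ray in `DL_2(q)` descends for exactly `n` steps in tree `i`
(bottoming out at height `-n`), then ascends forever in tree `i`.
For `n = 0` this says the ray ascends forever in tree `i` with no turn. -/
def DescendsExactly (i : Fin 2) (n : ℕ) (γ : ℕ → DLVert 2 q) : Prop :=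
  (∀ t : ℕ, t ≤ n → ((γ t).1 i).height = -(t : ℤ)) ∧
  (∀ t : ℕ, n ≤ t → ((γ t).1 i).height = (t : ℤ) - 2 * n)

/-- The subset `C_n^i` of the boundary: classes of rays bottoming out in
tree `i` after descending exactly `n` edges. -/
def Cset (q : ℕ) (i : Fin 2) (n : ℕ) : Set (Boundary 2 q) :=
  {x | ∃ γ : RaySpace 2 q, Quotient.mk (asympSetoid 2 q) γ = x ∧ DescendsExactly i n γ.1}

/-- Projection of a path in `DL_d(q)` to the `i`-th tree. -/
def proj (i : Fin d) (γ : ℕ → DLVert d q) : ℕ → TreeVert q := fun n => (γ n).1 i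

/-- Two (lazy) paths in the tree converge to the same end: both eventually
leave every ball, and they come within a uniformly bounded distance of each
other at arbitrarily late times. -/
def SameEnd (a b : ℕ → TreeVert q) : Prop :=
  (∀ R : ℕ, ∃ N : ℕ, ∀ n, N ≤ n → R ≤ (TreeGraph q).dist (a 0) (a n)) ∧
  (∀ R : ℕ, ∃ N : ℕ, ∀ n, N ≤ n → R ≤ (TreeGraph q).dist (b 0) (b n)) ∧
  (∃ C : ℕ, ∀ N : ℕ, ∃ m n, N ≤ m ∧ N ≤ n ∧ (TreeGraph q).dist (a m) (b n) ≤ C)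

/-- The step from `p m` to `p (m+1)` descends in tree `i`. -/
def StepDown (i : Fin d) (p : ℕ → DLVert d q) (m : ℕ) : Prop :=
  treeAdjUp ((p (m + 1)).1 i) ((p m).1 i)

/-- The step from `p m` to `p (m+1)` ascends in tree `i`. -/
def StepUp (i : Fin d) (p : ℕ → DLVert d q) (m : ℕ) : Prop :=
  treeAdjUp ((p m).1 i) ((p (m + 1)).1 i)

/-- A turn in tree `i`: a subpath beginning with a descent in `T_i` at step `t`,
ending with an ascent in `T_i` at step `s`, with no intervening step
involving `T_i`. -/
def IsTurn (i : Fin d) (p : ℕ → DLVert d q) (t s : ℕ) : Prop :=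
  t < s ∧ StepDown i p t ∧ StepUp i p s ∧
    ∀ m, t < m → m < s → (p (m + 1)).1 i = (p m).1 i


/-! ### Auxiliary machinery for the no-two-turn theorem -/

lemma treeVert_ext {u v : TreeVert q} (h1 : u.height = v.height)
    (h2 : u.labels = v.labels) : u = v := by
  cases u; cases v; simp_all

/-- The all-zero labelled vertex at a given height. -/
def zeroVert (q : ℕ) (h : ℤ) : TreeVert q :=
  ⟨h, fun _ => 0, fun _ => Or.inl rfl, fun _ _ => rfl, by simp⟩

@[simp] lemma zeroVert_height (h : ℤ) : (zeroVert q h).height = h := rfl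

@[simp] lemma zeroVert_labels (h : ℤ) (n : ℤ) : (zeroVert q h).labels n = 0 := rfl

/-- The truncation of a vertex's labels below a given height. -/
def truncVert (x : TreeVert q) (h : ℤ) : TreeVert q where
  height := h
  labels := fun n => if n < h then x.labels n else 0
  labels_lt := fun n => by
    split_ifs with hn
    · exact x.labels_lt n
    · exact Or.inl rfl
  supp_below := fun n hn => by
    rw [if_neg (not_lt.mpr hn)]
  fin_supp := by
    apply x.fin_supp.subset
    intro n hn
    simp only [Function.mem_support] at hn ⊢
    by_cases hc : n < h
    · rwa [if_pos hc] at hn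
    · rw [if_neg hc] at hn; exact absurd rfl hn

@[simp] lemma truncVert_height (x : TreeVert q) (h : ℤ) : (truncVert x h).height = h := rfl

lemma truncVert_labels (x : TreeVert q) (h n : ℤ) :
    (truncVert x h).labels n = if n < h then x.labels n else 0 := rfl

/-- Height of the `i`-coordinate of the shortcut path: up `d` steps, then down. -/
def hIdx (d t : ℕ) : ℤ := if t ≤ d then (t : ℤ) else 2 * (d : ℤ) - t

/-- The `j`-coordinate of the shortcut path: down `d` steps, then up towards `xj`. -/
def jComp (xj : TreeVert q) (d t : ℕ) : TreeVert q :=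
  if t ≤ d then zeroVert q (-(t : ℤ)) else truncVert xj ((t : ℤ) - 2 * d)

lemma jComp_height (xj : TreeVert q) (d t : ℕ) :
    (jComp xj d t).height = -(hIdx d t) := by
  unfold jComp hIdx
  split_ifs <;> simp <;> ring

/-- The shortcut path in `DL_2(q)`. -/
def betaP (i : Fin 2) (xj : TreeVert q) (d : ℕ) (t : ℕ) : DLVert 2 q :=
  ⟨fun m => if m = i then zeroVert q (hIdx d t) else jComp xj d t, by
    rw [Fin.sum_univ_two]
    have h01 : ∀ m : Fin 2, m = 0 ∨ m = 1 := by decide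
    rcases h01 i with h | h <;> subst h <;> simp [jComp_height] <;> omega⟩

lemma betaP_fst (i : Fin 2) (xj : TreeVert q) (d t : ℕ) :
    (betaP i xj d t).1 i = zeroVert q (hIdx d t) := by
  show (if i = i then _ else _) = _
  rw [if_pos rfl]

lemma betaP_snd (i : Fin 2) {m : Fin 2} (hm : m ≠ i) (xj : TreeVert q) (d t : ℕ) :
    (betaP i xj d t).1 m = jComp xj d t := by
  show (if m = i then _ else _) = _
  rw [if_neg hm]

lemma betaP_zero (i : Fin 2) (xj : TreeVert q) (d : ℕ) :
    betaP i xj d 0 = origin 2 q := by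
  apply Subtype.ext
  funext m
  show (if m = i then zeroVert q (hIdx d 0) else jComp xj d 0) = treeOrigin q
  have h1 : hIdx d 0 = 0 := by unfold hIdx; rw [if_pos (Nat.zero_le d)]; simp
  have h2 : jComp xj d 0 = zeroVert q 0 := by
    unfold jComp; rw [if_pos (Nat.zero_le d)]; norm_num
  split_ifs
  · rw [h1]; apply treeVert_ext <;> rfl
  · rw [h2]; apply treeVert_ext <;> rfl

lemma betaP_end_i (i : Fin 2) (xj : TreeVert q) (d k : ℕ) :
    (betaP i xj d (k + 2 * d)).1 i = zeroVert q (-(k : ℤ)) := by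
  rw [betaP_fst]
  congr 1
  unfold hIdx
  split_ifs <;> omega

lemma betaP_end_j (i : Fin 2) {m : Fin 2} (hm : m ≠ i) (xj : TreeVert q) (d k : ℕ)
    (hk : 0 < k) (hxh : xj.height = (k : ℤ)) :
    (betaP i xj d (k + 2 * d)).1 m = xj := by
  rw [betaP_snd i hm]
  unfold jComp
  rw [if_neg (by omega : ¬ k + 2 * d ≤ d)]
  apply treeVert_ext
  · rw [truncVert_height, hxh]; push_cast; ring
  · funext n
    rw [truncVert_labels]
    by_cases hc : n < ((k + 2 * d : ℕ) : ℤ) - 2 * d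
    · rw [if_pos hc]
    · rw [if_neg hc]
      exact (xj.supp_below n (by rw [hxh]; omega)).symm

lemma betaP_adj (i j : Fin 2) (hij : i ≠ j) (xj : TreeVert q) (d : ℕ)
    (hlow : ∀ n : ℤ, n < -(d : ℤ) → xj.labels n = 0) (t : ℕ) :
    (DLGraph 2 q).Adj (betaP i xj d t) (betaP i xj d (t + 1)) := by
  have hmem : ∀ m : Fin 2, m = i ∨ m = j := by
    have h2 : ∀ a b m : Fin 2, a ≠ b → m = a ∨ m = b := by decide
    exact fun m => h2 i j m hij
  by_cases hc : t < d
  · refine ⟨i, j, hij, ?_, ?_, ?_⟩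
    · -- ascend in tree i
      rw [betaP_fst, betaP_fst]
      refine ⟨?_, fun n _ => rfl⟩
      show hIdx d (t + 1) = hIdx d t + 1
      unfold hIdx
      rw [if_pos (by omega : t + 1 ≤ d), if_pos (by omega : t ≤ d)]
      push_cast; ring
    · -- descend in tree j
      rw [betaP_snd i hij.symm, betaP_snd i hij.symm]
      unfold jComp
      rw [if_pos (by omega : t ≤ d), if_pos (by omega : t + 1 ≤ d)]
      refine ⟨?_, fun n _ => rfl⟩
      show (-(t : ℤ)) = (-((t + 1 : ℕ) : ℤ)) + 1
      push_cast; ring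
    · intro m hm1 hm2
      rcases hmem m with h | h <;> [exact absurd h hm1; exact absurd h hm2]
  · push_neg at hc
    refine ⟨j, i, hij.symm, ?_, ?_, ?_⟩
    · -- ascend in tree j
      rw [betaP_snd i hij.symm, betaP_snd i hij.symm]
      constructor
      · rw [jComp_height, jComp_height]
        unfold hIdx
        split_ifs <;> omega
      · intro n hn
        rw [jComp_height] at hn
        have hh : -(hIdx d t) = (t : ℤ) - 2 * d := by
          unfold hIdx; split_ifs <;> omega
        rw [hh] at hn
        show (jComp xj d (t + 1)).labels n = (jComp xj d t).labels n
        unfold jComp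
        rw [if_neg (by omega : ¬ t + 1 ≤ d)]
        by_cases hc2 : t ≤ d
        · rw [if_pos hc2, truncVert_labels, zeroVert_labels]
          split_ifs with h3
          · exact hlow n (by omega)
          · rfl
        · rw [if_neg hc2, truncVert_labels, truncVert_labels]
          have hiff : (n < ((t + 1 : ℕ) : ℤ) - 2 * d) ↔ (n < (t : ℤ) - 2 * d) := by
            push_cast; omega
          simp only [hiff]
    · -- descend in tree i
      rw [betaP_fst, betaP_fst]
      refine ⟨?_, fun n _ => rfl⟩
      show hIdx d t = hIdx d (t + 1) + 1
      unfold hIdx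
      split_ifs <;> omega
    · intro m hm1 hm2
      rcases hmem m with h | h <;> [exact absurd h hm2; exact absurd h hm1]

lemma walk_of_chain {V : Type*} (G : SimpleGraph V) (β : ℕ → V) :
    ∀ n : ℕ, (∀ t, t < n → G.Adj (β t) (β (t + 1))) →
      ∃ p : G.Walk (β 0) (β n), p.length = n := by
  intro n
  induction n with
  | zero => exact fun _ => ⟨SimpleGraph.Walk.nil, rfl⟩
  | succ n ih =>
    intro h
    obtain ⟨p, hp⟩ := ih (fun t ht => h t (by omega))
    exact ⟨p.concat (h n (by omega)), by rw [SimpleGraph.Walk.length_concat, hp]⟩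

/-- there are no 2-turn geodesic rays in `DL_2(q)`. Any ray from
the origin which descends `k > 0` steps in tree `i`, then ascends `l > 0`
steps in tree `i` (i.e. bottoms out in the other tree), and thereafter
descends in tree `i` forever, reaches `γ (k + 2l)` non-geodesically: the
vertex `γ (k + 2l)` is at distance strictly less than `k + 2l` from the
origin. -/
theorem no_two_turn_rays {q : ℕ} (hq : 2 ≤ q) (i : Fin 2) (γ : ℕ → DLVert 2 q)
    (h0 : γ 0 = origin 2 q)
    (hpath : ∀ n : ℕ, (DLGraph 2 q).Adj (γ n) (γ (n + 1)))
    (k l : ℕ) (hk : 0 < k) (hl : 0 < l)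
    (hdesc1 : ∀ t, t < k → ((γ (t + 1)).1 i).height = ((γ t).1 i).height - 1)
    (hasc : ∀ t, k ≤ t → t < k + l → ((γ (t + 1)).1 i).height = ((γ t).1 i).height + 1)
    (hdesc2 : ∀ t, k + l ≤ t → ((γ (t + 1)).1 i).height = ((γ t).1 i).height - 1) :
    (DLGraph 2 q).dist (origin 2 q) (γ (k + 2 * l)) < k + 2 * l := by
  -- the other tree index
  obtain ⟨j, hj⟩ : ∃ j : Fin 2, j = 1 - i := ⟨1 - i, rfl⟩
  have hij : i ≠ j := by
    have h2 : ∀ m : Fin 2, m ≠ 1 - m := by decide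
    rw [hj]; exact h2 i
  have hmem : ∀ m : Fin 2, m = i ∨ m = j := by
    have h2 : ∀ a b m : Fin 2, a ≠ b → m = a ∨ m = b := by decide
    exact fun m => h2 i j m hij
  -- the heights of the two coordinates are opposite
  have hsum : ∀ v : DLVert 2 q, ((v.1 j)).height = -((v.1 i)).height := by
    intro v
    have h2 := v.2
    rw [Fin.sum_univ_two] at h2
    rcases hmem 0 with h | h <;> rcases hmem 1 with h' | h'
    · exact absurd (h.trans h'.symm) (by decide)
    · rw [← h, ← h']; omega
    · rw [← h, ← h']; omega
    · exact absurd (h.trans h'.symm) (by decide)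
  -- each step of the ray either ascends in tree i and descends in tree j, or
  -- vice versa
  have step : ∀ n : ℕ,
      (treeAdjUp ((γ n).1 i) ((γ (n + 1)).1 i) ∧
        treeAdjUp ((γ (n + 1)).1 j) ((γ n).1 j)) ∨
      (treeAdjUp ((γ (n + 1)).1 i) ((γ n).1 i) ∧
        treeAdjUp ((γ n).1 j) ((γ (n + 1)).1 j)) := by
    intro n
    obtain ⟨a, b, hab, hu, hd, -⟩ := hpath n
    rcases hmem a with ha | ha <;> rcases hmem b with hb | hb
    · exact absurd (ha.trans hb.symm) hab
    · subst ha; subst hb; exact Or.inl ⟨hu, hd⟩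
    · subst ha; subst hb; exact Or.inr ⟨hd, hu⟩
    · exact absurd (ha.trans hb.symm) hab
  -- the height of the i-coordinate along the ray
  have h0i : ((γ 0).1 i).height = 0 := by rw [h0]; rfl
  have hA : ∀ t, t ≤ k → ((γ t).1 i).height = -(t : ℤ) := by
    intro t
    induction t with
    | zero => intro _; simpa using h0i
    | succ t ih =>
      intro ht
      rw [hdesc1 t (by omega), ih (by omega)]
      push_cast; ring
  have hB : ∀ s, s ≤ l → ((γ (k + s)).1 i).height = -(k : ℤ) + s := by
    intro s
    induction s with
    | zero => intro _; simpa using hA k le_rfl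
    | succ s ih =>
      intro hs
      show ((γ (k + s + 1)).1 i).height = -(k : ℤ) + ((s + 1 : ℕ) : ℤ)
      rw [hasc (k + s) (by omega) (by omega), ih (by omega)]
      push_cast; ring
  have hC : ∀ s : ℕ, ((γ (k + l + s)).1 i).height = (l : ℤ) - k - s := by
    intro s
    induction s with
    | zero =>
      have h1 := hB l le_rfl
      show ((γ (k + l)).1 i).height = (l : ℤ) - (k : ℤ) - ((0 : ℕ) : ℤ)
      omega
    | succ s ih =>
      show ((γ (k + l + s + 1)).1 i).height = (l : ℤ) - k - ((s + 1 : ℕ) : ℤ)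
      rw [hdesc2 (k + l + s) (by omega), ih]
      push_cast; ring
  have hbound : ∀ t, t ≤ k + 2 * l →
      -(k : ℤ) ≤ ((γ t).1 i).height ∧ ((γ t).1 i).height ≤ ((l - k : ℕ) : ℤ) := by
    intro t ht
    rcases Nat.lt_or_ge t k with h | h
    · have h1 := hA t (by omega); omega
    · rcases Nat.lt_or_ge t (k + l) with h2 | h2
      · have h1 := hB (t - k) (by omega)
        rw [show k + (t - k) = t by omega] at h1
        omega
      · have h1 := hC (t - (k + l))
        rw [show k + l + (t - (k + l)) = t by omega] at h1
        omega
  have hTi : ((γ (k + 2 * l)).1 i).height = -(k : ℤ) := by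
    have h1 := hC l
    rw [show k + l + l = k + 2 * l by ring] at h1
    omega
  -- labels of the i-coordinate below level -k stay zero
  have Li : ∀ t, t ≤ k + 2 * l → ∀ n : ℤ, n < -(k : ℤ) →
      ((γ t).1 i).labels n = 0 := by
    intro t
    induction t with
    | zero => intro _ n _; rw [h0]; rfl
    | succ t ih =>
      intro ht n hn
      have hb1 := hbound t (by omega)
      have hb2 := hbound (t + 1) (by omega)
      rcases step t with ⟨hu, -⟩ | ⟨hd, -⟩
      · rw [hu.2 n (by omega)]
        exact ih (by omega) n hn
      · rw [← hd.2 n (by omega)]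
        exact ih (by omega) n hn
  -- labels of the j-coordinate below level -(l-k) stay zero
  have Lj : ∀ t, t ≤ k + 2 * l → ∀ n : ℤ, n < -((l - k : ℕ) : ℤ) →
      ((γ t).1 j).labels n = 0 := by
    intro t
    induction t with
    | zero => intro _ n _; rw [h0]; rfl
    | succ t ih =>
      intro ht n hn
      have hb1 := hbound t (by omega)
      have hb2 := hbound (t + 1) (by omega)
      have hs1 := hsum (γ t)
      have hs2 := hsum (γ (t + 1))
      rcases step t with ⟨-, hd⟩ | ⟨-, hu⟩
      · rw [← hd.2 n (by omega)]
        exact ih (by omega) n hn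
      · rw [hu.2 n (by omega)]
        exact ih (by omega) n hn
  -- identify the endpoint of the ray
  have hXi : (γ (k + 2 * l)).1 i = zeroVert q (-(k : ℤ)) := by
    apply treeVert_ext
    · rw [hTi]; rfl
    · funext n
      show ((γ (k + 2 * l)).1 i).labels n = 0
      rcases lt_or_ge n (-(k : ℤ)) with h | h
      · exact Li _ le_rfl n h
      · exact ((γ (k + 2 * l)).1 i).supp_below n (by rw [hTi]; exact h)
  have hxh : ((γ (k + 2 * l)).1 j).height = (k : ℤ) := by
    have := hsum (γ (k + 2 * l)); omega
  have hxlow : ∀ n : ℤ, n < -((l - k : ℕ) : ℤ) →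
      ((γ (k + 2 * l)).1 j).labels n = 0 := Lj _ le_rfl
  -- the shortcut path
  have hend : betaP i ((γ (k + 2 * l)).1 j) (l - k) (k + 2 * (l - k)) = γ (k + 2 * l) := by
    apply Subtype.ext
    funext m
    rcases hmem m with h | h <;> subst h
    · rw [betaP_end_i, hXi]
    · rw [betaP_end_j i hij.symm _ _ _ hk hxh]
  have hadj : ∀ t, t < k + 2 * (l - k) →
      (DLGraph 2 q).Adj (betaP i ((γ (k + 2 * l)).1 j) (l - k) t)
        (betaP i ((γ (k + 2 * l)).1 j) (l - k) (t + 1)) :=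
    fun t _ => betaP_adj i j hij _ (l - k) hxlow t
  obtain ⟨p, hp⟩ := walk_of_chain (DLGraph 2 q)
    (betaP i ((γ (k + 2 * l)).1 j) (l - k)) (k + 2 * (l - k)) hadj
  have hdist : (DLGraph 2 q).dist (origin 2 q) (γ (k + 2 * l)) ≤ k + 2 * (l - k) := by
    have h1 := SimpleGraph.dist_le p
    rw [hp, betaP_zero, hend] at h1
    exact h1
  omega

end DL
end

section
/- Let γ and γ' be geodesic rays in DL_2(q) emanating from the origin o which both descend to height exactly −h ≤ 0 in tree T_i before turning. If the projections γ^(i) and γ'^(i) to T_i are equal, then γ restricted to [2h, ∞) equals γ' restricted to [2h, ∞); in particular γ and γ' are asymptotic. -/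
namespace DL

variable {q d : ℕ}

lemma parent_unique {u u' v : TreeVert q} (h : treeAdjUp u v) (h' : treeAdjUp u' v) :
    u = u' := by
  have hh : u.height = u'.height := by omega
  refine treeVert_ext hh (funext fun n => ?_)
  by_cases hn : n = u.height
  · rw [u.supp_below n (le_of_eq hn.symm), u'.supp_below n (le_of_eq (hh ▸ hn.symm))]
  · rw [← h.2 n hn, h'.2 n (fun hc => hn (hc.trans hh.symm))]

lemma height_sum {v : DLVert 2 q} {i j : Fin 2} (hij : j ≠ i) :
    (v.1 j).height = -(v.1 i).height := by
  have h2 := v.2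
  rw [Fin.sum_univ_two] at h2
  fin_cases i <;> fin_cases j <;> simp_all <;> omega

lemma adj_cases {v w : DLVert 2 q} {i j : Fin 2} (hij : j ≠ i)
    (hall : ∀ k : Fin 2, k = i ∨ k = j)
    (hadj : (DLGraph 2 q).Adj v w) :
    (treeAdjUp (v.1 i) (w.1 i) ∧ treeAdjUp (w.1 j) (v.1 j)) ∨
    (treeAdjUp (v.1 j) (w.1 j) ∧ treeAdjUp (w.1 i) (v.1 i)) := by
  obtain ⟨a, b, hab, h1, h2, _⟩ := hadj
  rcases hall a with ha | ha <;> rcases hall b with hb | hb <;> subst ha <;> subst hb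
  · exact absurd rfl hab
  · exact Or.inl ⟨h1, h2⟩
  · exact Or.inr ⟨h1, h2⟩
  · exact absurd rfl hab

/-- two geodesic rays from the origin of `DL_2(q)` that bottom out
at height `-h` in tree `i` and have equal projections to tree `i` coincide
from time `2h` on; in particular they are asymptotic. -/
theorem merge_of_same_projection {q : ℕ} (hq : 2 ≤ q) (i : Fin 2) (h : ℕ)
    (γ γ' : ℕ → DLVert 2 q)
    (hγ : IsGeodesicRay γ) (hγ' : IsGeodesicRay γ')
    (hγ0 : γ 0 = origin 2 q) (hγ'0 : γ' 0 = origin 2 q)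
    (hdesc : DescendsExactly i h γ) (hdesc' : DescendsExactly i h γ')
    (hproj : ∀ t : ℕ, (γ t).1 i = (γ' t).1 i) :
    (∀ t : ℕ, 2 * h ≤ t → γ t = γ' t) ∧ Asymptotic γ γ' := by
  classical
  obtain ⟨j, hji, hall⟩ : ∃ j : Fin 2, j ≠ i ∧ ∀ k : Fin 2, k = i ∨ k = j := by
    fin_cases i
    · exact ⟨1, by decide, by decide⟩
    · exact ⟨0, by decide, by decide⟩
  -- consecutive points are adjacent
  have hadj : ∀ t, (DLGraph 2 q).Adj (γ t) (γ (t + 1)) := by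
    intro t
    have := hγ t (t + 1) (Nat.le_succ t)
    rw [Nat.succ_sub le_rfl, Nat.sub_self] at this
    exact (SimpleGraph.dist_eq_one_iff_adj).1 this
  have hadj' : ∀ t, (DLGraph 2 q).Adj (γ' t) (γ' (t + 1)) := by
    intro t
    have := hγ' t (t + 1) (Nat.le_succ t)
    rw [Nat.succ_sub le_rfl, Nat.sub_self] at this
    exact (SimpleGraph.dist_eq_one_iff_adj).1 this
  -- after time h, each step descends in tree j
  have hdown : ∀ δ : ℕ → DLVert 2 q, DescendsExactly i h δ →
      (∀ t, (DLGraph 2 q).Adj (δ t) (δ (t + 1))) →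
      ∀ t, h ≤ t → treeAdjUp ((δ (t + 1)).1 j) ((δ t).1 j) := by
    intro δ hd ha t ht
    rcases adj_cases hji hall (ha t) with ⟨_, h2⟩ | ⟨_, h2⟩
    · exact h2
    · exfalso
      have e1 := hd.2 t ht
      have e2 := hd.2 (t + 1) (le_trans ht (Nat.le_succ t))
      have := h2.1
      push_cast at e1 e2
      omega
  -- heights in tree i are nonpositive before time 2h
  have hnegh : ∀ δ : ℕ → DLVert 2 q, DescendsExactly i h δ →
      ∀ t, t ≤ 2 * h → ((δ t).1 i).height ≤ 0 := by
    intro δ hd t ht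
    rcases le_or_gt t h with h1 | h1
    · rw [hd.1 t h1]; omega
    · rw [hd.2 t h1.le]; push_cast; omega
  -- labels at negative levels in tree j stay zero up to time 2h
  have hlab : ∀ δ : ℕ → DLVert 2 q, DescendsExactly i h δ → δ 0 = origin 2 q →
      (∀ t, (DLGraph 2 q).Adj (δ t) (δ (t + 1))) →
      ∀ t, t ≤ 2 * h → ∀ n : ℤ, n < 0 → ((δ t).1 j).labels n = 0 := by
    intro δ hd h0 ha t
    induction t with
    | zero =>
      intro _ n _
      rw [h0]
      rfl
    | succ t ih =>
      intro ht n hn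
      have ih' := ih (by omega)
      rcases adj_cases hji hall (ha t) with ⟨_, h2⟩ | ⟨h2, _⟩
      · -- descending in j : labels agree except at new height, where it is 0
        by_cases hne : n = ((δ (t + 1)).1 j).height
        · exact ((δ (t + 1)).1 j).supp_below n (le_of_eq hne.symm)
        · rw [← h2.2 n hne]
          exact ih' n hn
      · -- ascending in j : labels agree except at old height, which is ≥ 0
        have hi0 : ((δ t).1 i).height ≤ 0 := hnegh δ hd t (by omega)
        have hj0 : ((δ t).1 j).height = -((δ t).1 i).height := height_sum hji
        rw [h2.2 n (by omega)]
        exact ih' n hn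
  -- at time 2h the j-coordinate is the tree origin
  have horig : ∀ δ : ℕ → DLVert 2 q, DescendsExactly i h δ → δ 0 = origin 2 q →
      (∀ t, (DLGraph 2 q).Adj (δ t) (δ (t + 1))) →
      (δ (2 * h)).1 j = treeOrigin q := by
    intro δ hd h0 ha
    have hht : ((δ (2 * h)).1 i).height = 0 := by
      have := hd.2 (2 * h) (by omega)
      push_cast at this
      omega
    have hjht : ((δ (2 * h)).1 j).height = 0 := by
      rw [height_sum hji, hht, neg_zero]
    refine treeVert_ext hjht (funext fun n => ?_)
    show _ = (0 : ℕ)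
    rcases lt_or_ge n 0 with hn | hn
    · exact hlab δ hd h0 ha (2 * h) le_rfl n hn
    · exact ((δ (2 * h)).1 j).supp_below n (by omega)
  -- equality at time 2h
  have hbase : γ (2 * h) = γ' (2 * h) := by
    apply Subtype.ext
    funext k
    rcases hall k with hk | hk <;> subst hk
    · exact hproj (2 * h)
    · rw [horig γ hdesc hγ0 hadj, horig γ' hdesc' hγ'0 hadj']
  -- forward propagation
  have key : ∀ t : ℕ, 2 * h ≤ t → γ t = γ' t := by
    intro t ht
    induction t, ht using Nat.le_induction with
    | base => exact hbase
    | succ t ht ih =>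
      apply Subtype.ext
      funext k
      rcases hall k with hk | hk <;> subst hk
      · exact hproj (t + 1)
      · have d1 := hdown γ hdesc hadj t (by omega)
        have d2 := hdown γ' hdesc' hadj' t (by omega)
        rw [ih] at d1
        exact parent_unique d1 d2
  refine ⟨key, ⟨4 * h, fun n => ?_⟩⟩
  rcases le_or_gt (2 * h) n with hn | hn
  · rw [key n hn, SimpleGraph.dist_self]
    omega
  · have d1 : (DLGraph 2 q).dist (γ n) (γ (2 * h)) = 2 * h - n := hγ n (2 * h) hn.le
    have d2 : (DLGraph 2 q).dist (γ' n) (γ' (2 * h)) = 2 * h - n := hγ' n (2 * h) hn.le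
    have r1 : (DLGraph 2 q).Reachable (γ n) (γ (2 * h)) :=
      SimpleGraph.Reachable.of_dist_ne_zero (by omega)
    have r2 : (DLGraph 2 q).Reachable (γ' (2 * h)) (γ' n) :=
      (SimpleGraph.Reachable.of_dist_ne_zero (by omega)).symm
    obtain ⟨p, hp⟩ := r1.exists_walk_length_eq_dist
    obtain ⟨p', hp'⟩ := r2.exists_walk_length_eq_dist
    rw [SimpleGraph.dist_comm] at hp'
    have hlen : (p.append (p'.copy hbase.symm rfl)).length = p.length + p'.length := by
      rw [SimpleGraph.Walk.length_append, SimpleGraph.Walk.length_copy]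
    calc (DLGraph 2 q).dist (γ n) (γ' n) ≤ (p.append (p'.copy hbase.symm rfl)).length :=
          SimpleGraph.dist_le _
      _ ≤ 4 * h := by omega

end DL
end

section
/- Two geodesic rays γ, γ' in DL_2(q) (based at the origin) are asymptotic if and only if for each i ∈ {0,1}, the projections γ^(i) and γ'^(i) converge to the same end of the tree T_i. -/
namespace DL

variable {q d : ℕ}

section Aux

lemma TreeVert.ext' {u v : TreeVert q} (h1 : u.height = v.height)
    (h2 : ∀ n, u.labels n = v.labels n) : u = v := by
  obtain ⟨hu, lu, _, _, _⟩ := u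
  obtain ⟨hv, lv, _, _, _⟩ := v
  simp only at h1 h2
  subst h1
  have : lu = lv := funext h2
  subst this
  rfl

def cut (k : ℤ) (u : TreeVert q) : TreeVert q where
  height := k
  labels := fun n => if n < k then u.labels n else 0
  labels_lt := by
    intro n
    by_cases h : n < k
    · simpa [h] using u.labels_lt n
    · simp [h]
  supp_below := by
    intro n hn
    simp [not_lt.mpr hn]
  fin_supp := by
    apply u.fin_supp.subset
    intro n hn
    simp only [Function.mem_support] at hn ⊢
    by_cases h : n < k
    · simpa [h] using hn
    · simp [h] at hn

@[simp] lemma cut_height (k : ℤ) (u : TreeVert q) : (cut k u).height = k := rfl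

lemma cut_labels (k : ℤ) (u : TreeVert q) (n : ℤ) :
    (cut k u).labels n = if n < k then u.labels n else 0 := rfl

lemma cut_self (u : TreeVert q) : cut u.height u = u := by
  apply TreeVert.ext'
  · rfl
  intro n
  rw [cut_labels]
  split
  · rfl
  · next h => exact (u.supp_below n (not_lt.mp h)).symm

lemma cut_eq_cut {k : ℤ} {u v : TreeVert q} (h : ∀ n, n < k → u.labels n = v.labels n) :
    cut k u = cut k v := by
  apply TreeVert.ext'
  · rfl
  intro n
  rw [cut_labels, cut_labels]
  split
  · next hn => exact h n hn
  · rfl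

lemma treeAdjUp_cut (k : ℤ) (u : TreeVert q) : treeAdjUp (cut k u) (cut (k+1) u) := by
  constructor
  · rfl
  · intro n hn
    rw [cut_height] at hn
    rw [cut_labels, cut_labels]
    by_cases h : n < k
    · rw [if_pos h, if_pos (by omega)]
    · rw [if_neg h, if_neg (by omega)]

lemma tree_adj_height {u v : TreeVert q} (h : (TreeGraph q).Adj u v) :
    v.height = u.height + 1 ∨ u.height = v.height + 1 := by
  rcases h with ⟨h1, _⟩ | ⟨h1, _⟩
  · exact Or.inl h1
  · exact Or.inr h1

lemma tree_walk_height {u v : TreeVert q} (p : (TreeGraph q).Walk u v) :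
    |u.height - v.height| ≤ (p.length : ℤ) := by
  induction p with
  | nil => simp
  | @cons u w v h p ih =>
    have h1 : |u.height - w.height| ≤ 1 := by
      rcases tree_adj_height h with h2 | h2 <;> rw [abs_le] <;> omega
    calc |u.height - v.height| ≤ |u.height - w.height| + |w.height - v.height| :=
          abs_sub_le _ _ _
    _ ≤ 1 + p.length := add_le_add h1 ih
    _ = ((SimpleGraph.Walk.cons h p).length : ℤ) := by
        rw [SimpleGraph.Walk.length_cons]; push_cast; ring

lemma tree_dist_height {u v : TreeVert q} (h : (TreeGraph q).Reachable u v) :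
    |u.height - v.height| ≤ ((TreeGraph q).dist u v : ℤ) := by
  obtain ⟨p, hp⟩ := h.exists_walk_length_eq_dist
  rw [← hp]; exact tree_walk_height p

lemma tree_walk_labels {k : ℤ} {u v : TreeVert q} (p : (TreeGraph q).Walk u v)
    (hk : ∀ w ∈ p.support, k < w.height) : u.labels k = v.labels k := by
  induction p with
  | nil => rfl
  | @cons u w v h p ih =>
    have hu : k < u.height := hk u (by simp [SimpleGraph.Walk.support_cons])
    have hw : k < w.height := hk w (by
      simp only [SimpleGraph.Walk.support_cons, List.mem_cons]
      exact Or.inr p.start_mem_support)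
    have h1 : u.labels k = w.labels k := by
      rcases h with ⟨_, h2⟩ | ⟨_, h2⟩
      · exact (h2 k (by omega)).symm
      · exact h2 k (by omega)
    rw [h1]
    exact ih (fun x hx => hk x (by
      simp only [SimpleGraph.Walk.support_cons, List.mem_cons]
      exact Or.inr hx))

lemma tree_walk_through {u v w : TreeVert q} (p : (TreeGraph q).Walk u v) (hw : w ∈ p.support) :
    (u.height - w.height) + (v.height - w.height) ≤ (p.length : ℤ) := by
  classical
  have hs := SimpleGraph.Walk.take_spec p hw
  have hlen : (p.takeUntil w hw).length + (p.dropUntil w hw).length = p.length := by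
    rw [← SimpleGraph.Walk.length_append, hs]
  have h1 := tree_walk_height (p.takeUntil w hw)
  have h2 := tree_walk_height (p.dropUntil w hw)
  have A : u.height - w.height ≤ |u.height - w.height| := le_abs_self _
  have B : v.height - w.height ≤ |w.height - v.height| := by
    rw [abs_sub_comm]; exact le_abs_self _
  have hc : ((p.takeUntil w hw).length : ℤ) + ((p.dropUntil w hw).length : ℤ) = (p.length : ℤ) := by
    exact_mod_cast hlen
  linarith

lemma tree_dist_labels {k : ℤ} {u v : TreeVert q} (h : (TreeGraph q).Reachable u v)
    (hk : u.labels k ≠ v.labels k) :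
    (u.height - k) + (v.height - k) ≤ ((TreeGraph q).dist u v : ℤ) := by
  obtain ⟨p, hp⟩ := h.exists_walk_length_eq_dist
  have hno : ¬ ∀ w ∈ p.support, k < w.height := fun hh => hk (tree_walk_labels p hh)
  push_neg at hno
  obtain ⟨w, hw, hwk⟩ := hno
  have := tree_walk_through p hw
  rw [hp] at this
  linarith


lemma fin_two (i : Fin 2) : i = 0 ∨ i = 1 := by
  rcases i with ⟨_ | _ | n, hi⟩
  · exact Or.inl rfl
  · exact Or.inr rfl
  · exact absurd hi (by omega)

lemma hsum (x : DLVert 2 q) : (x.1 0).height + (x.1 1).height = 0 := by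
  have h := x.2
  rwa [Fin.sum_univ_two] at h

lemma opp_height (x : DLVert 2 q) {i j : Fin 2} (hij : i ≠ j) :
    (x.1 j).height = -((x.1 i).height) := by
  have h := hsum x
  rcases fin_two i with hh | hh <;> rcases fin_two j with hh' | hh' <;> subst hh <;> subst hh' <;>
    first | exact absurd rfl hij | omega

def pt (u v : TreeVert q) (h : u.height + v.height = 0) : DLVert 2 q :=
  ⟨![u, v], by rw [Fin.sum_univ_two]; simpa using h⟩

@[simp] lemma pt_fst (u v : TreeVert q) (h) : (pt u v h).1 0 = u := rfl

@[simp] lemma pt_snd (u v : TreeVert q) (h) : (pt u v h).1 1 = v := rfl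

lemma DLVert.ext2 {x y : DLVert 2 q} (h0 : x.1 0 = y.1 0) (h1 : x.1 1 = y.1 1) : x = y := by
  apply Subtype.ext
  funext i
  rcases fin_two i with h | h <;> subst h <;> assumption

lemma adj_mk0 {x y : DLVert 2 q} (h0 : treeAdjUp (x.1 0) (y.1 0))
    (h1 : treeAdjUp (y.1 1) (x.1 1)) : (DLGraph 2 q).Adj x y := by
  refine ⟨0, 1, by decide, h0, h1, ?_⟩
  intro k hk0 hk1
  rcases fin_two k with h | h <;> subst h
  · exact absurd rfl hk0
  · exact absurd rfl hk1

lemma adj_comp {x y : DLVert 2 q} (h : (DLGraph 2 q).Adj x y) (k : Fin 2) :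
    treeAdjUp (x.1 k) (y.1 k) ∨ treeAdjUp (y.1 k) (x.1 k) := by
  obtain ⟨i, j, hij, hA, hB, _⟩ := h
  have hk : k = i ∨ k = j := by
    rcases fin_two i with h | h <;> rcases fin_two j with h' | h' <;>
      rcases fin_two k with h'' | h'' <;> subst h <;> subst h' <;> subst h'' <;> simp_all
  rcases hk with h | h <;> subst h
  · exact Or.inl hA
  · exact Or.inr hB

lemma proj_walk (i : Fin 2) {x y : DLVert 2 q} (p : (DLGraph 2 q).Walk x y) :
    ∃ p' : (TreeGraph q).Walk (x.1 i) (y.1 i), p'.length = p.length := by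
  induction p with
  | nil => exact ⟨SimpleGraph.Walk.nil, rfl⟩
  | @cons a b c h p ih =>
    obtain ⟨p', hp'⟩ := ih
    have hadj : (TreeGraph q).Adj (a.1 i) (b.1 i) := adj_comp h i
    exact ⟨SimpleGraph.Walk.cons hadj p', by simp [hp']⟩

lemma proj_reach (i : Fin 2) {x y : DLVert 2 q} (h : (DLGraph 2 q).Reachable x y) :
    (TreeGraph q).Reachable (x.1 i) (y.1 i) := by
  obtain ⟨p⟩ := h
  obtain ⟨p', _⟩ := proj_walk i p
  exact ⟨p'⟩

lemma proj_dist_le (i : Fin 2) {x y : DLVert 2 q} (h : (DLGraph 2 q).Reachable x y) :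
    (TreeGraph q).dist (x.1 i) (y.1 i) ≤ (DLGraph 2 q).dist x y := by
  obtain ⟨p, hp⟩ := h.exists_walk_length_eq_dist
  obtain ⟨p', hp'⟩ := proj_walk i p
  calc (TreeGraph q).dist (x.1 i) (y.1 i) ≤ p'.length := SimpleGraph.dist_le p'
  _ = p.length := hp'
  _ = _ := hp

def line (u v : TreeVert q) (k : ℤ) : DLVert 2 q :=
  pt (cut k u) (cut (-k) v) (by simp)

@[simp] lemma line_fst (u v : TreeVert q) (k : ℤ) : (line u v k).1 0 = cut k u := rfl

@[simp] lemma line_snd (u v : TreeVert q) (k : ℤ) : (line u v k).1 1 = cut (-k) v := rfl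

lemma line_adj (u v : TreeVert q) (k : ℤ) :
    (DLGraph 2 q).Adj (line u v k) (line u v (k+1)) := by
  apply adj_mk0
  · exact treeAdjUp_cut k u
  · have h := treeAdjUp_cut (-(k+1)) v
    have e : -(k+1) + 1 = -k := by ring
    rw [e] at h
    exact h

lemma line_walk_up (u v : TreeVert q) (k : ℤ) :
    ∀ n : ℕ, ∃ p : (DLGraph 2 q).Walk (line u v k) (line u v (k + n)), p.length = n := by
  intro n
  induction n with
  | zero => exact ⟨SimpleGraph.Walk.nil.copy rfl (congrArg (line u v) (by norm_num)), by simp⟩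
  | succ n ih =>
    obtain ⟨p, hp⟩ := ih
    refine ⟨(p.concat (line_adj u v (k + n))).copy rfl (congrArg (line u v) (by push_cast; ring)), ?_⟩
    rw [SimpleGraph.Walk.length_copy, SimpleGraph.Walk.length_concat, hp]

lemma line_walk (u v : TreeVert q) (j k : ℤ) :
    ∃ p : (DLGraph 2 q).Walk (line u v j) (line u v k), (p.length : ℤ) = |k - j| := by
  rcases le_total j k with h | h
  · obtain ⟨p, hp⟩ := line_walk_up u v j (k - j).toNat
    refine ⟨p.copy rfl (congrArg (line u v) (by omega)), ?_⟩
    rw [SimpleGraph.Walk.length_copy, hp, abs_of_nonneg (by omega : (0:ℤ) ≤ k - j)]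
    omega
  · obtain ⟨p, hp⟩ := line_walk_up u v k (j - k).toNat
    refine ⟨(p.copy rfl (congrArg (line u v) (by omega))).reverse, ?_⟩
    rw [SimpleGraph.Walk.length_reverse, SimpleGraph.Walk.length_copy, hp,
      abs_of_nonpos (by omega : k - j ≤ 0)]
    omega

lemma line_dist (u v : TreeVert q) (j k : ℤ) :
    ((DLGraph 2 q).dist (line u v j) (line u v k) : ℤ) ≤ |k - j| := by
  obtain ⟨p, hp⟩ := line_walk u v j k
  calc ((DLGraph 2 q).dist (line u v j) (line u v k) : ℤ) ≤ (p.length : ℤ) := by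
        exact_mod_cast SimpleGraph.dist_le p
  _ = _ := hp

lemma cut_treeOrigin_zero : cut 0 (treeOrigin q) = treeOrigin q := cut_self (treeOrigin q)

lemma origin_eq_line : origin 2 q = line (treeOrigin q) (treeOrigin q) 0 := by
  apply DLVert.ext2
  · show treeOrigin q = cut 0 (treeOrigin q)
    exact cut_treeOrigin_zero.symm
  · show treeOrigin q = cut (-0) (treeOrigin q)
    rw [neg_zero]
    exact cut_treeOrigin_zero.symm

lemma dist_origin_le (x : DLVert 2 q) (mm MM : ℤ)
    (hm0 : mm ≤ 0) (hM0 : 0 ≤ MM)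
    (hmh : mm ≤ (x.1 0).height) (hMh : (x.1 0).height ≤ MM)
    (h5 : ∀ n, n < mm → (x.1 0).labels n = 0)
    (h6 : ∀ n, n < -MM → (x.1 1).labels n = 0) :
    ((DLGraph 2 q).dist (origin 2 q) x : ℤ) ≤ 2*(MM - mm) - |(x.1 0).height| := by
  have hvh : (x.1 1).height = -((x.1 0).height) := opp_height x (by decide)
  have ex : line (x.1 0) (x.1 1) ((x.1 0).height) = x := by
    apply DLVert.ext2
    · show cut ((x.1 0).height) (x.1 0) = x.1 0
      exact cut_self (x.1 0)
    · show cut (-(x.1 0).height) (x.1 1) = x.1 1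
      rw [← hvh]
      exact cut_self (x.1 1)
  rcases le_or_gt 0 ((x.1 0).height) with hpos | hneg
  · have e1 : line (treeOrigin q) (treeOrigin q) mm = line (x.1 0) (treeOrigin q) mm := by
      apply DLVert.ext2
      · exact cut_eq_cut (fun n hn => (h5 n hn).symm)
      · rfl
    have e2 : line (x.1 0) (treeOrigin q) MM = line (x.1 0) (x.1 1) MM := by
      apply DLVert.ext2
      · rfl
      · exact cut_eq_cut (fun n hn => (h6 n hn).symm)
    obtain ⟨p1, hp1⟩ := line_walk (treeOrigin q) (treeOrigin q) 0 mm
    obtain ⟨p2, hp2⟩ := line_walk (x.1 0) (treeOrigin q) mm MM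
    obtain ⟨p3, hp3⟩ := line_walk (x.1 0) (x.1 1) MM ((x.1 0).height)
    set ptot := ((p1.copy origin_eq_line.symm e1).append (p2.copy rfl e2)).append (p3.copy rfl ex)
      with hptot
    have hlen : (ptot.length : ℤ) = |mm - 0| + |MM - mm| + |(x.1 0).height - MM| := by
      rw [hptot]
      rw [SimpleGraph.Walk.length_append, SimpleGraph.Walk.length_append,
        SimpleGraph.Walk.length_copy, SimpleGraph.Walk.length_copy, SimpleGraph.Walk.length_copy]
      push_cast
      rw [hp1, hp2, hp3]
    have hd : ((DLGraph 2 q).dist (origin 2 q) x : ℤ) ≤ (ptot.length : ℤ) := by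
      exact_mod_cast SimpleGraph.dist_le ptot
    rw [hlen, abs_of_nonpos (by omega : mm - 0 ≤ 0), abs_of_nonneg (by omega : (0:ℤ) ≤ MM - mm),
      abs_of_nonpos (by omega : (x.1 0).height - MM ≤ 0)] at hd
    rw [abs_of_nonneg hpos]
    omega
  · have e1 : line (treeOrigin q) (treeOrigin q) MM = line (treeOrigin q) (x.1 1) MM := by
      apply DLVert.ext2
      · rfl
      · exact cut_eq_cut (fun n hn => (h6 n hn).symm)
    have e2 : line (treeOrigin q) (x.1 1) mm = line (x.1 0) (x.1 1) mm := by
      apply DLVert.ext2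
      · exact cut_eq_cut (fun n hn => (h5 n hn).symm)
      · rfl
    obtain ⟨p1, hp1⟩ := line_walk (treeOrigin q) (treeOrigin q) 0 MM
    obtain ⟨p2, hp2⟩ := line_walk (treeOrigin q) (x.1 1) MM mm
    obtain ⟨p3, hp3⟩ := line_walk (x.1 0) (x.1 1) mm ((x.1 0).height)
    set ptot := ((p1.copy origin_eq_line.symm e1).append (p2.copy rfl e2)).append (p3.copy rfl ex)
      with hptot
    have hlen : (ptot.length : ℤ) = |MM - 0| + |mm - MM| + |(x.1 0).height - mm| := by
      rw [hptot]
      rw [SimpleGraph.Walk.length_append, SimpleGraph.Walk.length_append,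
        SimpleGraph.Walk.length_copy, SimpleGraph.Walk.length_copy, SimpleGraph.Walk.length_copy]
      push_cast
      rw [hp1, hp2, hp3]
    have hd : ((DLGraph 2 q).dist (origin 2 q) x : ℤ) ≤ (ptot.length : ℤ) := by
      exact_mod_cast SimpleGraph.dist_le ptot
    rw [hlen, abs_of_nonneg (by omega : (0:ℤ) ≤ MM - 0), abs_of_nonpos (by omega : mm - MM ≤ 0),
      abs_of_nonneg (by omega : (0:ℤ) ≤ (x.1 0).height - mm)] at hd
    rw [abs_of_nonpos (by omega : (x.1 0).height ≤ 0)]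
    omega

@[simp] lemma proj_apply (i : Fin d) (γ : ℕ → DLVert d q) (n : ℕ) :
    proj i γ n = (γ n).1 i := rfl

lemma ray_adj {γ : ℕ → DLVert 2 q} (hγ : IsGeodesicRay γ) (n : ℕ) :
    (DLGraph 2 q).Adj (γ n) (γ (n+1)) := by
  have hd0 := hγ n (n+1) (by omega)
  have hd : (DLGraph 2 q).dist (γ n) (γ (n+1)) = 1 := by omega
  have hr : (DLGraph 2 q).Reachable (γ n) (γ (n+1)) :=
    SimpleGraph.Reachable.of_dist_ne_zero (by omega)
  obtain ⟨p, hp⟩ := hr.exists_walk_length_eq_dist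
  rw [hd] at hp
  exact SimpleGraph.Walk.adj_of_length_eq_one hp

lemma ray_reach {γ : ℕ → DLVert 2 q} (hγ : IsGeodesicRay γ) (m n : ℕ) :
    (DLGraph 2 q).Reachable (γ m) (γ n) := by
  have key : ∀ k, (DLGraph 2 q).Reachable (γ 0) (γ k) := by
    intro k
    induction k with
    | zero => exact SimpleGraph.Reachable.refl _
    | succ k ih => exact ih.trans (ray_adj hγ k).reachable
  exact (key m).symm.trans (key n)

lemma ray_hstep {γ : ℕ → DLVert 2 q} (hγ : IsGeodesicRay γ) (m : ℕ) :
    ((γ (m+1)).1 0).height = ((γ m).1 0).height + 1 ∨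
      ((γ (m+1)).1 0).height = ((γ m).1 0).height - 1 := by
  rcases adj_comp (ray_adj hγ m) 0 with h | h
  · exact Or.inl h.1
  · right; have := h.1; omega

lemma ray_H0 {γ : ℕ → DLVert 2 q} (hγ0 : γ 0 = origin 2 q) : ((γ 0).1 0).height = 0 := by
  rw [hγ0]; rfl

lemma ray_labels_zero {γ : ℕ → DLVert 2 q} (hγ : IsGeodesicRay γ) (hγ0 : γ 0 = origin 2 q)
    (i : Fin 2) (k : ℤ) :
    ∀ n : ℕ, (∀ t, t ≤ n → k < ((γ t).1 i).height) → ((γ n).1 i).labels k = 0 := by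
  intro n
  induction n with
  | zero => intro _; rw [hγ0]; rfl
  | succ n ih =>
    intro hk
    have h1 : ((γ (n+1)).1 i).labels k = ((γ n).1 i).labels k := by
      rcases adj_comp (ray_adj hγ n) i with h | h
      · exact h.2 k (by have := hk n (by omega); omega)
      · exact (h.2 k (by have := hk (n+1) (by omega); omega)).symm
    rw [h1]
    exact ih (fun t ht => hk t (by omega))

def runMax (H : ℕ → ℤ) : ℕ → ℤ
  | 0 => H 0
  | n+1 => max (runMax H n) (H (n+1))

def runMin (H : ℕ → ℤ) : ℕ → ℤ
  | 0 => H 0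
  | n+1 => min (runMin H n) (H (n+1))

@[simp] lemma runMax_zero (H : ℕ → ℤ) : runMax H 0 = H 0 := rfl
@[simp] lemma runMax_succ (H : ℕ → ℤ) (n : ℕ) :
    runMax H (n+1) = max (runMax H n) (H (n+1)) := rfl
@[simp] lemma runMin_zero (H : ℕ → ℤ) : runMin H 0 = H 0 := rfl
@[simp] lemma runMin_succ (H : ℕ → ℤ) (n : ℕ) :
    runMin H (n+1) = min (runMin H n) (H (n+1)) := rfl

lemma le_runMax (H : ℕ → ℤ) {t n : ℕ} (h : t ≤ n) : H t ≤ runMax H n := by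
  induction n with
  | zero => have : t = 0 := by omega
            subst this; simp
  | succ n ih =>
    rcases Nat.lt_or_ge t (n+1) with h' | h'
    · exact (ih (by omega)).trans (le_max_left _ _)
    · have : t = n+1 := by omega
      subst this; exact le_max_right _ _

lemma runMin_le (H : ℕ → ℤ) {t n : ℕ} (h : t ≤ n) : runMin H n ≤ H t := by
  induction n with
  | zero => have : t = 0 := by omega
            subst this; simp
  | succ n ih =>
    rcases Nat.lt_or_ge t (n+1) with h' | h'
    · exact (min_le_left _ _).trans (ih (by omega))
    · have : t = n+1 := by omega
      subst this; exact min_le_right _ _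

lemma le_runMin (H : ℕ → ℤ) {n : ℕ} {c : ℤ} (h : ∀ t, t ≤ n → c ≤ H t) : c ≤ runMin H n := by
  induction n with
  | zero => simpa using h 0 le_rfl
  | succ n ih =>
    rw [runMin_succ, le_min_iff]
    exact ⟨ih (fun t ht => h t (by omega)), h (n+1) le_rfl⟩

lemma runMax_mono (H : ℕ → ℤ) {a b : ℕ} (h : a ≤ b) : runMax H a ≤ runMax H b := by
  induction b with
  | zero => have : a = 0 := by omega
            subst this; exact le_refl _
  | succ b ih =>
    rcases Nat.lt_or_ge a (b+1) with h' | h'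
    · exact (ih (by omega)).trans (le_max_left _ _)
    · have : a = b+1 := by omega
      subst this; exact le_refl _

lemma runMin_anti (H : ℕ → ℤ) {a b : ℕ} (h : a ≤ b) : runMin H b ≤ runMin H a := by
  induction b with
  | zero => have : a = 0 := by omega
            subst this; exact le_refl _
  | succ b ih =>
    rcases Nat.lt_or_ge a (b+1) with h' | h'
    · exact (min_le_left _ _).trans (ih (by omega))
    · have : a = b+1 := by omega
      subst this; exact le_refl _

lemma exists_runMax (H : ℕ → ℤ) (n : ℕ) : ∃ t, t ≤ n ∧ H t = runMax H n := by
  induction n with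
  | zero => exact ⟨0, le_rfl, rfl⟩
  | succ n ih =>
    obtain ⟨t, ht, he⟩ := ih
    rcases le_total (H (n+1)) (runMax H n) with h | h
    · exact ⟨t, by omega, by rw [runMax_succ, max_eq_left h]; exact he⟩
    · exact ⟨n+1, le_rfl, by rw [runMax_succ, max_eq_right h]⟩

lemma exists_runMin (H : ℕ → ℤ) (n : ℕ) : ∃ t, t ≤ n ∧ H t = runMin H n := by
  induction n with
  | zero => exact ⟨0, le_rfl, rfl⟩
  | succ n ih =>
    obtain ⟨t, ht, he⟩ := ih
    rcases le_total (runMin H n) (H (n+1)) with h | h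
    · exact ⟨t, by omega, by rw [runMin_succ, min_eq_left h]; exact he⟩
    · exact ⟨n+1, le_rfl, by rw [runMin_succ, min_eq_right h]⟩

lemma step_seg {H : ℕ → ℤ} (hstep : ∀ n, H (n+1) = H n + 1 ∨ H (n+1) = H n - 1)
    (a : ℕ) : ∀ k : ℕ, |H (a + k) - H a| ≤ (k : ℤ) := by
  intro k
  induction k with
  | zero => simp
  | succ k ih =>
    have h : |H (a+k+1) - H (a+k)| ≤ 1 := by
      rcases hstep (a+k) with h | h <;> rw [h, abs_le] <;> constructor <;> omega
    calc |H (a + (k+1)) - H a| = |H ((a+k)+1) - H a| := by rw [show a + (k+1) = (a+k)+1 by ring]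
    _ ≤ |H ((a+k)+1) - H (a+k)| + |H (a+k) - H a| := abs_sub_le _ _ _
    _ ≤ 1 + k := add_le_add h ih
    _ = ((k+1 : ℕ) : ℤ) := by push_cast; ring

lemma ray_ident {γ : ℕ → DLVert 2 q} (hγ : IsGeodesicRay γ) (hγ0 : γ 0 = origin 2 q) (n : ℕ) :
    2*(runMax (fun t => ((γ t).1 0).height) n - runMin (fun t => ((γ t).1 0).height) n)
      = n + |((γ n).1 0).height| := by
  set H : ℕ → ℤ := fun t => ((γ t).1 0).height with hHdef
  have h00 : H 0 = 0 := ray_H0 hγ0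
  have hstep : ∀ m, H (m+1) = H m + 1 ∨ H (m+1) = H m - 1 := fun m => ray_hstep hγ m
  have hub : (n:ℤ) + |H n| ≤ 2*(runMax H n - runMin H n) := by
    have hmin0 : runMin H n ≤ 0 := by
      have h := runMin_le H (Nat.zero_le n); omega
    have hmax0 : 0 ≤ runMax H n := by
      have h := le_runMax H (Nat.zero_le n); omega
    have happ := dist_origin_le (γ n) (runMin H n) (runMax H n) hmin0 hmax0
      (runMin_le H le_rfl) (le_runMax H le_rfl)
      (fun k hk => ray_labels_zero hγ hγ0 0 k n (fun t ht => lt_of_lt_of_le hk (runMin_le H ht)))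
      (fun k hk => ray_labels_zero hγ hγ0 1 k n (fun t ht => by
        have h1 : ((γ t).1 1).height = -(H t) := opp_height (γ t) (by decide)
        have h2 : H t ≤ runMax H n := le_runMax H ht
        omega))
    have hdn : (DLGraph 2 q).dist (origin 2 q) (γ n) = n := by
      rw [← hγ0]
      have := hγ 0 n (Nat.zero_le n)
      omega
    rw [hdn] at happ
    linarith
  have hlb : 2*(runMax H n - runMin H n) ≤ (n:ℤ) + |H n| := by
    obtain ⟨t1, ht1, he1⟩ := exists_runMin H n
    obtain ⟨t2, ht2, he2⟩ := exists_runMax H n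
    have hs0 : ∀ x y : ℕ, x ≤ y → |H y - H x| ≤ (y:ℤ) - x := by
      intro x y hxy
      have h := step_seg hstep x (y - x)
      rw [show x + (y - x) = y by omega] at h
      calc |H y - H x| ≤ ((y - x : ℕ) : ℤ) := h
      _ = (y:ℤ) - x := by omega
    rw [← he1, ← he2]
    rcases le_total t1 t2 with h12 | h12
    · have A := abs_le.mp (hs0 0 t1 (Nat.zero_le _))
      have B := abs_le.mp (hs0 t1 t2 h12)
      have C := abs_le.mp (hs0 t2 n ht2)
      have habs := le_abs_self (H n)
      rw [h00] at A
      linarith [A.1, A.2, B.1, B.2, C.1, C.2]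
    · have A := abs_le.mp (hs0 0 t2 (Nat.zero_le _))
      have B := abs_le.mp (hs0 t2 t1 h12)
      have C := abs_le.mp (hs0 t1 n ht1)
      have habs := neg_abs_le (H n)
      rw [h00] at A
      linarith [A.1, A.2, B.1, B.2, C.1, C.2]
  linarith

def Shape1 (H : ℕ → ℤ) : Prop :=
  ∃ a : ℕ, (∀ t, t ≤ a → H t = -(t:ℤ)) ∧ (∀ t, a ≤ t → H t = (t:ℤ) - 2*(a:ℤ))

def Shape2 (H : ℕ → ℤ) : Prop :=
  ∃ b : ℕ, (∀ t, t ≤ b → H t = (t:ℤ)) ∧ (∀ t, b ≤ t → H t = 2*(b:ℤ) - (t:ℤ))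

lemma comb_S_up {H : ℕ → ℤ}
    (hI : ∀ n : ℕ, 2*(runMax H n - runMin H n) = n + |H n|)
    (n : ℕ) (h1 : 0 ≤ H n) (h2 : H (n+1) = H n + 1) : runMax H n = H n := by
  by_contra hne
  have hle : H n ≤ runMax H n := le_runMax H le_rfl
  have hmin : runMin H n ≤ H n := runMin_le H le_rfl
  have e1 := hI n
  have e2 := hI (n+1)
  rw [runMax_succ, runMin_succ, h2, max_eq_left (by omega), min_eq_left (by omega)] at e2
  rw [abs_of_nonneg h1] at e1
  rw [abs_of_nonneg (by omega : (0:ℤ) ≤ H n + 1)] at e2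
  omega

lemma comb_S_down {H : ℕ → ℤ}
    (hI : ∀ n : ℕ, 2*(runMax H n - runMin H n) = n + |H n|)
    (n : ℕ) (h1 : H n ≤ 0) (h2 : H (n+1) = H n - 1) : runMin H n = H n := by
  by_contra hne
  have hle : runMin H n ≤ H n := runMin_le H le_rfl
  have hmax : H n ≤ runMax H n := le_runMax H le_rfl
  have e1 := hI n
  have e2 := hI (n+1)
  rw [runMax_succ, runMin_succ, h2, max_eq_left (by omega), min_eq_left (by omega)] at e2
  rw [abs_of_nonpos h1] at e1
  rw [abs_of_nonpos (by omega : H n - 1 ≤ 0)] at e2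
  omega

lemma comb_G {H : ℕ → ℤ} (hstep : ∀ n, H (n+1) = H n + 1 ∨ H (n+1) = H n - 1)
    (hI : ∀ n : ℕ, 2*(runMax H n - runMin H n) = n + |H n|)
    (w : ℕ) (hneg : H w < 0) (hup : H (w+1) = H w + 1)
    (hmin : runMin H w = H w) (hMax : 1 ≤ runMax H w) : False := by
  classical
  by_cases hall : ∀ t, w ≤ t → H (t+1) = H t + 1
  · have asc : ∀ k : ℕ, H (w + k) = H w + k := by
      intro k
      induction k with
      | zero => simp
      | succ k ih =>
        rw [show w + (k+1) = (w+k)+1 by ring, hall (w+k) (by omega), ih]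
        push_cast; ring
    have hu0 : H (w + (-H w).toNat) = 0 := by
      have := asc (-H w).toNat; omega
    have hupu : H ((w + (-H w).toNat) + 1) = H (w + (-H w).toNat) + 1 := hall _ (by omega)
    have hS := comb_S_up hI (w + (-H w).toNat) (by omega) hupu
    have hmono := runMax_mono H (show w ≤ w + (-H w).toNat by omega)
    omega
  · push_neg at hall
    obtain ⟨t0, ht0a, ht0b⟩ := hall
    have hPex : ∃ t, w ≤ t ∧ H (t+1) ≠ H t + 1 := ⟨t0, ht0a, ht0b⟩
    have hv : w ≤ Nat.find hPex ∧ H (Nat.find hPex + 1) ≠ H (Nat.find hPex) + 1 :=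
      Nat.find_spec hPex
    set v := Nat.find hPex with hvdef
    have hvmin : ∀ t, t < v → ¬(w ≤ t ∧ H (t+1) ≠ H t + 1) := fun t ht => Nat.find_min hPex ht
    have hdown : H (v+1) = H v - 1 := (hstep v).resolve_left hv.2
    have hwv : w < v := by
      rcases Nat.lt_or_ge w v with h | h
      · exact h
      · exfalso
        have hvw : v = w := by omega
        rw [hvw] at hv
        exact hv.2 hup
    have asc : ∀ k : ℕ, w + k ≤ v → H (w + k) = H w + k := by
      intro k
      induction k with
      | zero => simp
      | succ k ih =>
        intro hkv
        have h1 : H (w + k + 1) = H (w + k) + 1 := by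
          by_contra hne
          exact hvmin (w+k) (by omega) ⟨by omega, hne⟩
        rw [show w + (k+1) = (w+k)+1 by ring, h1, ih (by omega)]
        push_cast; ring
    have hHv : H v = H w + ((v - w : ℕ) : ℤ) := by
      have := asc (v - w) (by omega)
      rwa [show w + (v-w) = v by omega] at this
    rcases le_or_gt (H v) 0 with h0v | h0v
    · have hS := comb_S_down hI v h0v hdown
      have hanti := runMin_anti H (le_of_lt hwv)
      omega
    · have hult : w + (-H w).toNat < v := by omega
      have hu0 : H (w + (-H w).toNat) = 0 := by
        have := asc (-H w).toNat (by omega); omega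
      have hupu : H ((w + (-H w).toNat)+1) = H (w + (-H w).toNat) + 1 := by
        by_contra hne
        exact hvmin _ hult ⟨by omega, hne⟩
      have hS := comb_S_up hI _ (by omega) hupu
      have hmono := runMax_mono H (show w ≤ w + (-H w).toNat by omega)
      omega

lemma comb_Kpos {H : ℕ → ℤ} (hstep : ∀ n, H (n+1) = H n + 1 ∨ H (n+1) = H n - 1)
    (h0 : H 0 = 0)
    (hI : ∀ n : ℕ, 2*(runMax H n - runMin H n) = n + |H n|)
    (hU0 : H 1 = H 0 + 1) : Shape1 H ∨ Shape2 H := by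
  classical
  by_cases hall : ∀ t, H (t+1) = H t + 1
  · left
    have key : ∀ t : ℕ, H t = t := by
      intro t
      induction t with
      | zero => simpa using h0
      | succ t ih => rw [hall t, ih]; push_cast; ring
    refine ⟨0, fun t ht => ?_, fun t _ => by rw [key t]; push_cast; ring⟩
    have : t = 0 := by omega
    subst this; simpa using h0
  · push_neg at hall
    have hPex : ∃ t, H (t+1) ≠ H t + 1 := hall
    have hbspec : H (Nat.find hPex + 1) ≠ H (Nat.find hPex) + 1 := Nat.find_spec hPex
    set b := Nat.find hPex with hbdef
    have hbmin : ∀ t, t < b → H (t+1) = H t + 1 := fun t ht => not_ne_iff.mp (Nat.find_min hPex ht)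
    have hbdown : H (b+1) = H b - 1 := (hstep b).resolve_left hbspec
    have hb1 : 1 ≤ b := by
      rcases Nat.eq_zero_or_pos b with h | h
      · rw [h] at hbspec; exact absurd hU0 hbspec
      · exact h
    have hasc : ∀ t, t ≤ b → H t = t := by
      intro t
      induction t with
      | zero => intro _; simpa using h0
      | succ t ih =>
        intro ht
        rw [hbmin t (by omega), ih (by omega)]
        push_cast; ring
    by_cases hdall : ∀ t, b ≤ t → H (t+1) = H t - 1
    · right
      refine ⟨b, hasc, ?_⟩
      intro t ht
      induction t, ht using Nat.le_induction with
      | base => rw [hasc b le_rfl]; push_cast; ring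
      | succ t ht ih => rw [hdall t ht, ih]; push_cast; ring
    · push_neg at hdall
      obtain ⟨t1, ht1a, ht1b⟩ := hdall
      have hQex : ∃ t, b ≤ t ∧ H (t+1) = H t + 1 := ⟨t1, ht1a, (hstep t1).resolve_right ht1b⟩
      have hwspec : b ≤ Nat.find hQex ∧ H (Nat.find hQex + 1) = H (Nat.find hQex) + 1 :=
        Nat.find_spec hQex
      set w := Nat.find hQex with hwdef
      have hwmin : ∀ t, t < w → ¬(b ≤ t ∧ H (t+1) = H t + 1) := fun t ht => Nat.find_min hQex ht
      have hbw : b < w := by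
        rcases Nat.lt_or_ge b w with h | h
        · exact h
        · exfalso
          have hwb : w = b := by omega
          rw [hwb] at hwspec
          omega
      have hdesc : ∀ t, b ≤ t → t ≤ w → H t = 2*(b:ℤ) - t := by
        intro t ht
        induction t, ht using Nat.le_induction with
        | base => intro _; rw [hasc b le_rfl]; push_cast; ring
        | succ t ht ih =>
          intro htw
          have hd : H (t+1) = H t - 1 := by
            rcases hstep t with h | h
            · exact absurd ⟨ht, h⟩ (hwmin t (by omega))
            · exact h
          rw [hd, ih (by omega)]
          push_cast; ring
      have hHw : H w = 2*(b:ℤ) - w := hdesc w (by omega) le_rfl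
      rcases le_or_gt 0 (H w) with h0w | h0w
      · exfalso
        have hS := comb_S_up hI w h0w hwspec.2
        have hle2 : (b:ℤ) ≤ runMax H w := by
          have h := le_runMax H (show b ≤ w by omega)
          rwa [hasc b le_rfl] at h
        omega
      · exfalso
        have hminw : runMin H w = H w := by
          have h1 : runMin H w ≤ H w := runMin_le H le_rfl
          have h2 : H w ≤ runMin H w := by
            apply le_runMin
            intro t htw
            rcases le_or_gt t b with h | h
            · rw [hasc t h]; omega
            · rw [hdesc t (by omega) htw]; omega
          omega
        have hMaxw : 1 ≤ runMax H w := by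
          have h := le_runMax H (show b ≤ w by omega)
          rw [hasc b le_rfl] at h
          omega
        exact comb_G hstep hI w h0w hwspec.2 hminw hMaxw

lemma runMax_neg (H : ℕ → ℤ) : ∀ n, runMax (fun m => -H m) n = -(runMin H n) := by
  intro n
  induction n with
  | zero => rfl
  | succ n ih =>
    simp only [runMax_succ, runMin_succ, ih]
    exact max_neg_neg _ _

lemma runMin_neg (H : ℕ → ℤ) : ∀ n, runMin (fun m => -H m) n = -(runMax H n) := by
  intro n
  induction n with
  | zero => rfl
  | succ n ih =>
    simp only [runMin_succ, runMax_succ, ih]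
    exact min_neg_neg _ _

lemma comb_main {H : ℕ → ℤ} (hstep : ∀ n, H (n+1) = H n + 1 ∨ H (n+1) = H n - 1)
    (h0 : H 0 = 0)
    (hI : ∀ n : ℕ, 2*(runMax H n - runMin H n) = n + |H n|) : Shape1 H ∨ Shape2 H := by
  rcases hstep 0 with h | h
  · exact comb_Kpos hstep h0 hI h
  · have hstep' : ∀ n, (fun m => -H m) (n+1) = (fun m => -H m) n + 1 ∨
        (fun m => -H m) (n+1) = (fun m => -H m) n - 1 := by
      intro n
      have := hstep n
      dsimp only
      omega
    have h0' : (fun m => -H m) 0 = 0 := by dsimp only; rw [h0]; ring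
    have hI' : ∀ n : ℕ, 2*(runMax (fun m => -H m) n - runMin (fun m => -H m) n)
        = n + |(fun m => -H m) n| := by
      intro n
      rw [runMax_neg, runMin_neg]
      dsimp only
      rw [abs_neg]
      have := hI n
      linarith
    have hU0' : (fun m => -H m) 1 = (fun m => -H m) 0 + 1 := by dsimp only; rw [h, h0]; ring
    rcases comb_Kpos hstep' h0' hI' hU0' with ⟨a, h1, h2⟩ | ⟨a, h1, h2⟩
    · right
      refine ⟨a, fun t ht => ?_, fun t ht => ?_⟩
      · have := h1 t ht; dsimp only at this; omega
      · have := h2 t ht; dsimp only at this; omega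
    · left
      refine ⟨a, fun t ht => ?_, fun t ht => ?_⟩
      · have := h1 t ht; dsimp only at this; omega
      · have := h2 t ht; dsimp only at this; omega

lemma exists_descends {γ : ℕ → DLVert 2 q} (hγ : IsGeodesicRay γ) (hγ0 : γ 0 = origin 2 q) :
    ∃ i a, DescendsExactly i a γ := by
  have hres := comb_main (fun m => ray_hstep hγ m) (ray_H0 hγ0) (ray_ident hγ hγ0)
  rcases hres with ⟨a, h1, h2⟩ | ⟨b, h1, h2⟩
  · exact ⟨0, a, fun t ht => h1 t ht, fun t ht => h2 t ht⟩
  · refine ⟨1, b, fun t ht => ?_, fun t ht => ?_⟩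
    · have h : ((γ t).1 0).height = (t:ℤ) := h1 t ht
      have hop : ((γ t).1 1).height = -(((γ t).1 0).height) := opp_height (γ t) (by decide)
      omega
    · have h : ((γ t).1 0).height = 2*(b:ℤ) - (t:ℤ) := h2 t ht
      have hop : ((γ t).1 1).height = -(((γ t).1 0).height) := opp_height (γ t) (by decide)
      omega

lemma ray_escape {γ : ℕ → DLVert 2 q} (hγ : IsGeodesicRay γ) (hγ0 : γ 0 = origin 2 q)
    {i₀ : Fin 2} {a : ℕ} (hD : DescendsExactly i₀ a γ) (i : Fin 2) (R : ℕ) :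
    ∃ N, ∀ n, N ≤ n → R ≤ (TreeGraph q).dist ((γ 0).1 i) ((γ n).1 i) := by
  refine ⟨2*a + R, fun n hn => ?_⟩
  have hre : (TreeGraph q).Reachable ((γ 0).1 i) ((γ n).1 i) := proj_reach i (ray_reach hγ 0 n)
  have hdh := tree_dist_height hre
  have h0h : ((γ 0).1 i).height = 0 := by rw [hγ0]; rfl
  have h1 : ((γ n).1 i₀).height = (n:ℤ) - 2*(a:ℤ) := hD.2 n (by omega)
  have h2 : ((γ n).1 i).height = (n:ℤ) - 2*(a:ℤ) ∨
      ((γ n).1 i).height = -((n:ℤ) - 2*(a:ℤ)) := by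
    by_cases hii : i = i₀
    · rw [hii]; exact Or.inl h1
    · right
      rw [opp_height (γ n) (fun hE : i₀ = i => hii hE.symm), h1]
  have habs : (R:ℤ) ≤ |((γ 0).1 i).height - ((γ n).1 i).height| := by
    rw [h0h]
    rcases h2 with h | h <;> rw [h]
    · rw [abs_of_nonpos (by omega : (0:ℤ) - ((n:ℤ) - 2*(a:ℤ)) ≤ 0)]; omega
    · rw [abs_of_nonneg (by omega : (0:ℤ) ≤ (0:ℤ) - -((n:ℤ) - 2*(a:ℤ)))]; omega
  have hfin : (R:ℤ) ≤ ((TreeGraph q).dist ((γ 0).1 i) ((γ n).1 i) : ℤ) := le_trans habs hdh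
  exact_mod_cast hfin

lemma ray_small {γ γ' : ℕ → DLVert 2 q} (hγ : IsGeodesicRay γ) (hγ0 : γ 0 = origin 2 q)
    (hγ' : IsGeodesicRay γ') (hγ'0 : γ' 0 = origin 2 q) (n : ℕ) :
    (DLGraph 2 q).dist (γ n) (γ' n) ≤ 2*n := by
  obtain ⟨p1, hp1⟩ := (ray_reach hγ n 0).exists_walk_length_eq_dist
  obtain ⟨p2, hp2⟩ := (ray_reach hγ' 0 n).exists_walk_length_eq_dist
  have e : γ' 0 = γ 0 := by rw [hγ0, hγ'0]
  have hd := SimpleGraph.dist_le (p1.append (p2.copy e rfl))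
  rw [SimpleGraph.Walk.length_append, SimpleGraph.Walk.length_copy, hp1, hp2] at hd
  have d1 : (DLGraph 2 q).dist (γ n) (γ 0) = n := by
    rw [SimpleGraph.dist_comm]
    have := hγ 0 n (by omega)
    omega
  have d2 : (DLGraph 2 q).dist (γ' 0) (γ' n) = n := by
    have := hγ' 0 n (by omega)
    omega
  omega

lemma SameEnd_symm {a b : ℕ → TreeVert q} (h : SameEnd a b) : SameEnd b a := by
  obtain ⟨h1, h2, C, h3⟩ := h
  refine ⟨h2, h1, C, fun N => ?_⟩
  obtain ⟨m, n, hm, hn, hd⟩ := h3 N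
  exact ⟨n, m, hn, hm, by rwa [SimpleGraph.dist_comm]⟩

lemma ray_stab {γ : ℕ → DLVert 2 q} (hγ : IsGeodesicRay γ) {i₀ : Fin 2} {a : ℕ}
    (hD : DescendsExactly i₀ a γ) {t : ℕ} (hta : a ≤ t) {k : ℤ} (hk : k < (t:ℤ) - 2*(a:ℤ)) :
    ∀ t', t ≤ t' → ((γ t').1 i₀).labels k = ((γ t).1 i₀).labels k := by
  intro t' ht'
  induction t', ht' using Nat.le_induction with
  | base => rfl
  | succ t' ht' ih =>
    have hup : treeAdjUp ((γ t').1 i₀) ((γ (t'+1)).1 i₀) := by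
      rcases adj_comp (ray_adj hγ t') i₀ with h | h
      · exact h
      · exfalso
        have e1 : ((γ t').1 i₀).height = (t':ℤ) - 2*(a:ℤ) := hD.2 t' (by omega)
        have e2 : ((γ (t'+1)).1 i₀).height = ((t'+1 : ℕ):ℤ) - 2*(a:ℤ) := hD.2 (t'+1) (by omega)
        have e3 := h.1
        rw [e1, e2] at e3
        push_cast at e3
        omega
    rw [hup.2 k (by rw [hD.2 t' (by omega)]; omega)]
    exact ih

lemma ray_AG {γ γ' : ℕ → DLVert 2 q} (hγ : IsGeodesicRay γ) (hγ0 : γ 0 = origin 2 q)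
    (hγ' : IsGeodesicRay γ') (hγ'0 : γ' 0 = origin 2 q) {i₀ : Fin 2} {a a' : ℕ}
    (hD : DescendsExactly i₀ a γ) (hD' : DescendsExactly i₀ a' γ')
    (hSE : SameEnd (proj i₀ γ) (proj i₀ γ')) {t : ℕ} (hta : a ≤ t) (hta' : a' ≤ t)
    {k : ℤ} (hk : k < (t:ℤ) - 2*(a:ℤ)) (hk' : k < (t:ℤ) - 2*(a':ℤ)) :
    ((γ t).1 i₀).labels k = ((γ' t).1 i₀).labels k := by
  obtain ⟨Cs, hCs⟩ := hSE.2.2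
  obtain ⟨m, n, hm, hn, hd⟩ := hCs (t + 2*a + 2*a' + Cs + k.toNat + 1)
  simp only [proj_apply] at hd
  have e1 : ((γ m).1 i₀).labels k = ((γ t).1 i₀).labels k := ray_stab hγ hD hta hk m (by omega)
  have e2 : ((γ' n).1 i₀).labels k = ((γ' t).1 i₀).labels k := ray_stab hγ' hD' hta' hk' n (by omega)
  by_contra hne
  have hne' : ((γ m).1 i₀).labels k ≠ ((γ' n).1 i₀).labels k := by
    rw [e1, e2]; exact hne
  have hre : (TreeGraph q).Reachable ((γ m).1 i₀) ((γ' n).1 i₀) := by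
    have e : (γ 0).1 i₀ = (γ' 0).1 i₀ := by rw [hγ0, hγ'0]
    have h2 : (TreeGraph q).Reachable ((γ 0).1 i₀) ((γ' n).1 i₀) := by
      rw [e]; exact proj_reach i₀ (ray_reach hγ' 0 n)
    exact (proj_reach i₀ (ray_reach hγ m 0)).trans h2
  have hlow := tree_dist_labels hre hne'
  have hdz : ((TreeGraph q).dist ((γ m).1 i₀) ((γ' n).1 i₀) : ℤ) ≤ (Cs:ℤ) := by exact_mod_cast hd
  have hh1 : ((γ m).1 i₀).height = (m:ℤ) - 2*(a:ℤ) := hD.2 m (by omega)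
  have hh2 : ((γ' n).1 i₀).height = (n:ℤ) - 2*(a':ℤ) := hD'.2 n (by omega)
  rw [hh1, hh2] at hlow
  have hkt : k ≤ (k.toNat : ℤ) := Int.self_le_toNat k
  omega

lemma ray_E1 {γ : ℕ → DLVert 2 q} (hγ : IsGeodesicRay γ) (hγ0 : γ 0 = origin 2 q)
    {i₀ j₀ : Fin 2} {a : ℕ} (hD : DescendsExactly i₀ a γ) (hj : j₀ ≠ i₀) {t : ℕ}
    (ht : 2*a ≤ t) :
    (γ t).1 j₀ = cut (2*(a:ℤ) - t) (treeOrigin q) := by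
  have hop : ∀ s : ℕ, ((γ s).1 j₀).height = -(((γ s).1 i₀).height) :=
    fun s => opp_height (γ s) (Ne.symm hj)
  apply TreeVert.ext'
  · rw [cut_height, hop t, hD.2 t (by omega)]
    ring
  · intro n
    rw [cut_labels]
    split
    · next hlt =>
      have hz : ((γ t).1 j₀).labels n = 0 := by
        apply ray_labels_zero hγ hγ0 j₀ n t
        intro s hs
        rw [hop s]
        rcases le_or_gt s a with h | h
        · rw [hD.1 s h]; omega
        · rw [hD.2 s (le_of_lt h)]; omega
      rw [hz]; rfl
    · next hge =>
      apply ((γ t).1 j₀).supp_below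
      rw [hop t, hD.2 t (by omega)]
      omega

lemma converse_far {γ γ' : ℕ → DLVert 2 q} (hγ : IsGeodesicRay γ) (hγ0 : γ 0 = origin 2 q)
    (hγ' : IsGeodesicRay γ') (hγ'0 : γ' 0 = origin 2 q) {i₀ : Fin 2} {a a' : ℕ}
    (hD : DescendsExactly i₀ a γ) (hD' : DescendsExactly i₀ a' γ')
    (hSE : SameEnd (proj i₀ γ) (proj i₀ γ')) (hle : a' ≤ a) {t : ℕ} (ht : 2*a + 2*a' ≤ t) :
    ((DLGraph 2 q).dist (γ t) (γ' t) : ℤ) ≤ 2*(a:ℤ) - 2*(a':ℤ) := by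
  have hta : a ≤ t := by omega
  have hta' : a' ≤ t := by omega
  have hh' : ((γ' t).1 i₀).height = (t:ℤ) - 2*(a':ℤ) := hD'.2 t hta'
  have hE2a : (γ' t).1 i₀ = cut ((t:ℤ) - 2*(a':ℤ)) ((γ' t).1 i₀) := by
    conv_lhs => rw [← cut_self ((γ' t).1 i₀)]
    rw [hh']
  have hE2b : (γ t).1 i₀ = cut ((t:ℤ) - 2*(a:ℤ)) ((γ' t).1 i₀) := by
    apply TreeVert.ext'
    · rw [cut_height]; exact hD.2 t hta
    · intro n
      rw [cut_labels]
      split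
      · next hlt =>
        exact ray_AG hγ hγ0 hγ' hγ'0 hD hD' hSE hta hta' hlt (by omega)
      · next hge =>
        exact ((γ t).1 i₀).supp_below n (by have := hD.2 t hta; omega)
  rcases fin_two i₀ with h | h <;> subst h
  · set u := (γ' t).1 0 with hu
    have hE1 : (γ t).1 1 = cut (2*(a:ℤ) - t) (treeOrigin q) :=
      ray_E1 hγ hγ0 hD (by decide) (by omega)
    have hE1' : (γ' t).1 1 = cut (2*(a':ℤ) - t) (treeOrigin q) :=
      ray_E1 hγ' hγ'0 hD' (by decide) (by omega)
    have g1 : γ t = line u (treeOrigin q) ((t:ℤ) - 2*(a:ℤ)) := by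
      apply DLVert.ext2
      · rw [line_fst]; exact hE2b
      · rw [line_snd, hE1, show -((t:ℤ) - 2*(a:ℤ)) = 2*(a:ℤ) - t from by ring]
    have g2 : γ' t = line u (treeOrigin q) ((t:ℤ) - 2*(a':ℤ)) := by
      apply DLVert.ext2
      · rw [line_fst]; exact hE2a
      · rw [line_snd, hE1', show -((t:ℤ) - 2*(a':ℤ)) = 2*(a':ℤ) - t from by ring]
    rw [g1, g2]
    have hld := line_dist u (treeOrigin q) ((t:ℤ) - 2*(a:ℤ)) ((t:ℤ) - 2*(a':ℤ))
    rw [abs_of_nonneg (by omega : (0:ℤ) ≤ ((t:ℤ) - 2*(a':ℤ)) - ((t:ℤ) - 2*(a:ℤ)))] at hld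
    omega
  · set u := (γ' t).1 1 with hu
    have hE1 : (γ t).1 0 = cut (2*(a:ℤ) - t) (treeOrigin q) :=
      ray_E1 hγ hγ0 hD (by decide) (by omega)
    have hE1' : (γ' t).1 0 = cut (2*(a':ℤ) - t) (treeOrigin q) :=
      ray_E1 hγ' hγ'0 hD' (by decide) (by omega)
    have g1 : γ t = line (treeOrigin q) u (2*(a:ℤ) - t) := by
      apply DLVert.ext2
      · rw [line_fst]; exact hE1
      · rw [line_snd, show -(2*(a:ℤ) - t) = (t:ℤ) - 2*(a:ℤ) from by ring]; exact hE2b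
    have g2 : γ' t = line (treeOrigin q) u (2*(a':ℤ) - t) := by
      apply DLVert.ext2
      · rw [line_fst]; exact hE1'
      · rw [line_snd, show -(2*(a':ℤ) - t) = (t:ℤ) - 2*(a':ℤ) from by ring]; exact hE2a
    rw [g1, g2]
    have hld := line_dist (treeOrigin q) u (2*(a:ℤ) - t) (2*(a':ℤ) - t)
    rw [abs_of_nonpos (by omega : (2*(a':ℤ) - t) - (2*(a:ℤ) - t) ≤ 0)] at hld
    omega

end Aux

/-- two geodesic rays from the origin of `DL_2(q)` are asymptotic
iff, for each tree, their projections converge to the same end. -/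
theorem asymptotic_iff_same_ends {q : ℕ} (hq : 2 ≤ q) (γ γ' : ℕ → DLVert 2 q)
    (hγ : IsGeodesicRay γ) (hγ' : IsGeodesicRay γ')
    (hγ0 : γ 0 = origin 2 q) (hγ'0 : γ' 0 = origin 2 q) :
    Asymptotic γ γ' ↔ ∀ i : Fin 2, SameEnd (proj i γ) (proj i γ') := by
  obtain ⟨i₁, a, hD⟩ := exists_descends hγ hγ0
  obtain ⟨i₂, a', hD'⟩ := exists_descends hγ' hγ'0
  constructor
  · rintro ⟨C, hC⟩ i
    refine ⟨fun R => ?_, fun R => ?_, C, fun N => ⟨N, N, le_rfl, le_rfl, ?_⟩⟩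
    · simpa only [proj_apply] using ray_escape hγ hγ0 hD i R
    · simpa only [proj_apply] using ray_escape hγ' hγ'0 hD' i R
    · simp only [proj_apply]
      have hre : (DLGraph 2 q).Reachable (γ N) (γ' N) := by
        have e : γ 0 = γ' 0 := by rw [hγ0, hγ'0]
        refine (ray_reach hγ N 0).trans ?_
        rw [e]
        exact ray_reach hγ' 0 N
      exact (proj_dist_le i hre).trans (hC N)
  · intro hSE
    have hi12 : i₁ = i₂ := by
      by_contra hne
      obtain ⟨Cs, hCs⟩ := (hSE i₁).2.2
      obtain ⟨m, n, hm, hn, hd⟩ := hCs (2*a + 2*a' + Cs + 1)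
      simp only [proj_apply] at hd
      have hre : (TreeGraph q).Reachable ((γ m).1 i₁) ((γ' n).1 i₁) := by
        have e : (γ 0).1 i₁ = (γ' 0).1 i₁ := by rw [hγ0, hγ'0]
        refine (proj_reach i₁ (ray_reach hγ m 0)).trans ?_
        rw [e]
        exact proj_reach i₁ (ray_reach hγ' 0 n)
      have hgt := tree_dist_height hre
      have h1 : ((γ m).1 i₁).height = (m:ℤ) - 2*(a:ℤ) := hD.2 m (by omega)
      have h2 : ((γ' n).1 i₁).height = -((n:ℤ) - 2*(a':ℤ)) := by
        have h3 : ((γ' n).1 i₂).height = (n:ℤ) - 2*(a':ℤ) := hD'.2 n (by omega)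
        rw [opp_height (γ' n) (fun hE : i₂ = i₁ => hne hE.symm), h3]
      have hdz : ((TreeGraph q).dist ((γ m).1 i₁) ((γ' n).1 i₁) : ℤ) ≤ (Cs:ℤ) := by
        exact_mod_cast hd
      rw [h1, h2] at hgt
      rw [abs_of_nonneg (by omega)] at hgt
      omega
    subst hi12
    rcases le_total a' a with hle | hle
    · refine ⟨2*(2*a + 2*a'), fun n => ?_⟩
      rcases le_or_gt n (2*a + 2*a') with hn | hn
      · have h2 := ray_small hγ hγ0 hγ' hγ'0 n
        omega
      · have h3 := converse_far hγ hγ0 hγ' hγ'0 hD hD' (hSE i₁) hle (t := n) (by omega)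
        omega
    · refine ⟨2*(2*a + 2*a'), fun n => ?_⟩
      rcases le_or_gt n (2*a + 2*a') with hn | hn
      · have h2 := ray_small hγ hγ0 hγ' hγ'0 n
        omega
      · have h3 := converse_far hγ' hγ'0 hγ hγ0 hD' hD (SameEnd_symm (hSE i₁)) hle (t := n) (by omega)
        rw [SimpleGraph.dist_comm] at h3
        omega

end DL
end

section
/- The visual boundary ∂DL_2(q) is compact. -/
namespace DL

variable {q d : ℕ}

lemma TreeVert.ext'_s11 {q : ℕ} {a b : TreeVert q} (h1 : a.height = b.height)
    (h2 : a.labels = b.labels) : a = b := by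
  cases a; cases b; simp_all

/-- Tree vertices with height bounded by `n` and labels supported in `[-n, ∞)`. -/
def TreeBall (q n : ℕ) : Set (TreeVert q) :=
  {t | t.height.natAbs ≤ n ∧ ∀ m : ℤ, m < -(n : ℤ) → t.labels m = 0}

lemma treeBall_finite (q n : ℕ) : (TreeBall q n).Finite := by
  have hinj : Set.InjOn (fun t : TreeVert q =>
      (t.height, fun k : Fin (2 * n) => t.labels ((k : ℤ) - n))) (TreeBall q n) := by
    intro a ha b hb hab
    simp only [Prod.mk.injEq] at hab
    obtain ⟨hh, hl⟩ := hab
    refine TreeVert.ext'_s11 hh ?_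
    funext m
    by_cases hm : -(n : ℤ) ≤ m ∧ m < n
    · have hk : ((m + n).toNat : ℤ) = m + n := Int.toNat_of_nonneg (by omega)
      have hk2 : (m + n).toNat < 2 * n := by omega
      have := congrFun hl ⟨(m + n).toNat, hk2⟩
      simpa [hk, show ((m + n).toNat : ℤ) - n = m by omega] using this
    · push_neg at hm
      rcases lt_or_ge m (-(n : ℤ)) with h | h
      · rw [ha.2 m h, hb.2 m h]
      · have hmn : (n : ℤ) ≤ m := hm h
        have h1 : a.labels m = 0 := a.supp_below m (by have := ha.1; omega)
        have h2 : b.labels m = 0 := b.supp_below m (by have := hb.1; omega)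
        rw [h1, h2]
  have himg : (fun t : TreeVert q =>
      (t.height, fun k : Fin (2 * n) => t.labels ((k : ℤ) - n))) '' (TreeBall q n) ⊆
      (Set.Icc (-(n : ℤ)) n) ×ˢ (Set.pi Set.univ fun _ : Fin (2 * n) => Set.Iio (q + 1)) := by
    rintro _ ⟨t, ht, rfl⟩
    dsimp only
    refine ⟨by have := ht.1; constructor <;> omega, fun k _ => ?_⟩
    rcases t.labels_lt ((k : ℤ) - n) with h | h <;> simp [Set.mem_Iio] <;> omega
  have hfin : ((Set.Icc (-(n : ℤ)) n) ×ˢ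
      (Set.pi Set.univ fun _ : Fin (2 * n) => Set.Iio (q + 1))).Finite :=
    (Set.finite_Icc _ _).prod (Set.Finite.pi fun _ => Set.finite_Iio _)
  exact Set.Finite.of_finite_image (hfin.subset himg) hinj

/-- The ball in `DL_2(q)`. -/
def DLBall (q n : ℕ) : Set (DLVert 2 q) :=
  {v | ∀ i : Fin 2, v.1 i ∈ TreeBall q n}

lemma dlBall_finite (q n : ℕ) : (DLBall q n).Finite := by
  have hinj : Set.InjOn (fun v : DLVert 2 q => v.1) (DLBall q n) := by
    intro a _ b _ h; exact Subtype.ext h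
  have himg : (fun v : DLVert 2 q => v.1) '' (DLBall q n) ⊆
      Set.pi Set.univ fun _ : Fin 2 => TreeBall q n := by
    rintro _ ⟨v, hv, rfl⟩ i _; exact hv i
  have hfin : (Set.pi Set.univ fun _ : Fin 2 => TreeBall q n).Finite :=
    Set.Finite.pi fun _ => treeBall_finite q n
  exact Set.Finite.of_finite_image (hfin.subset himg) hinj

lemma treeBall_mono {q n : ℕ} : TreeBall q n ⊆ TreeBall q (n + 1) := by
  intro t ht
  exact ⟨by have := ht.1; omega, fun m hm => ht.2 m (by omega)⟩

lemma adj_ball_step {q n : ℕ} {v w : DLVert 2 q} (hv : v ∈ DLBall q n)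
    (h : (DLGraph 2 q).Adj v w) : w ∈ DLBall q (n + 1) := by
  obtain ⟨i, j, hij, h1, h2, h3⟩ := h
  intro k
  by_cases hki : k = i
  · subst hki
    have hk := hv k
    refine ⟨by have := hk.1; have := h1.1; omega, fun m hm => ?_⟩
    have hne : m ≠ (v.1 k).height := by have := hk.1; omega
    rw [h1.2 m hne]
    exact hk.2 m (by omega)
  · by_cases hkj : k = j
    · subst hkj
      have hk := hv k
      refine ⟨by have := hk.1; have := h2.1; omega, fun m hm => ?_⟩
      have hne : m ≠ (w.1 k).height := by have := hk.1; have := h2.1; omega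
      rw [← h2.2 m hne]
      exact hk.2 m (by omega)
    · rw [← h3 k hki hkj]
      exact treeBall_mono (hv k)

lemma ray_mem_ball {q : ℕ} {γ : ℕ → DLVert 2 q} (hγ : IsGeodesicRay γ)
    (h0 : γ 0 = origin 2 q) : ∀ n, γ n ∈ DLBall q n := by
  intro n
  induction n with
  | zero =>
    rw [h0]
    intro i
    exact ⟨by simp [origin, treeOrigin], fun m _ => rfl⟩
  | succ n ih =>
    have hd : (DLGraph 2 q).dist (γ n) (γ (n + 1)) = 1 := by
      have := hγ n (n + 1) (by omega); omega
    have hr : (DLGraph 2 q).Reachable (γ n) (γ (n + 1)) :=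
      SimpleGraph.Reachable.of_dist_ne_zero (by omega)
    obtain ⟨p, hp⟩ := hr.exists_walk_length_eq_dist
    have hadj : (DLGraph 2 q).Adj (γ n) (γ (n + 1)) :=
      p.adj_of_length_eq_one (by omega)
    exact adj_ball_step ih hadj

instance : DiscreteTopology (DLVert d q) := ⟨rfl⟩

/-- the visual boundary of `DL_2(q)` is compact. -/
theorem boundary_compact {q : ℕ} (hq : 2 ≤ q) :
    CompactSpace (Boundary 2 q) := by
  set R : Set (ℕ → DLVert 2 q) :=
    {γ | IsGeodesicRay γ ∧ γ 0 = origin 2 q} with hRdef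
  have hRclosed : IsClosed R := by
    have : R = ((fun γ : ℕ → DLVert 2 q => γ 0) ⁻¹' {origin 2 q}) ∩
        ⋂ p : ℕ × ℕ, (fun γ : ℕ → DLVert 2 q => (γ p.1, γ p.2)) ⁻¹'
          {x : DLVert 2 q × DLVert 2 q |
            p.1 ≤ p.2 → (DLGraph 2 q).dist x.1 x.2 = p.2 - p.1} := by
      ext γ
      simp only [hRdef, Set.mem_setOf_eq, Set.mem_inter_iff, Set.mem_preimage,
        Set.mem_singleton_iff, Set.mem_iInter, IsGeodesicRay, Prod.forall]
      tauto
    rw [this]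
    refine IsClosed.inter (IsClosed.preimage (continuous_apply 0) (isClosed_discrete _)) ?_
    refine isClosed_iInter fun p => IsClosed.preimage ?_ (isClosed_discrete _)
    exact (continuous_apply p.1).prodMk (continuous_apply p.2)
  have hsub : R ⊆ Set.pi Set.univ fun n => DLBall q n := by
    rintro γ ⟨h1, h2⟩ n _
    exact ray_mem_ball h1 h2 n
  have hbig : IsCompact (Set.pi Set.univ fun n => DLBall q n) :=
    isCompact_univ_pi fun n => (dlBall_finite q n).isCompact
  have hRcompact : IsCompact R := hbig.of_isClosed_subset hRclosed hsub
  haveI : CompactSpace (RaySpace 2 q) := isCompact_iff_compactSpace.mp hRcompact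
  exact Quotient.compactSpace

end DL
end
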